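/- arXiv:1807.02156 — 8 statements merged into one kernel-verified Lean document; each statement's English description precedes it below -/
import Mathlib

section
/- Let n ≥ 1 and let A be a set partition of {1,…,n}. Then the depth index and the intertwining number of A satisfy t(A) + i(A) = n(n−1)/2. -/
open Finset
open scoped Classical

noncomputable section

/-- The arcs of a set partition `A` of `{1,…,n}`: pairs `(i,j)` with `i < j`, `i` and `j` in
the same block, and no element of that block strictly between `i` and `j`. -/
noncomputable def arcs (n : ℕ) (A : Finpartition (Finset.Icc 1 n)) : Finset (ℕ × ℕ) :=
  (Finset.Icc 1 n ×ˢ Finset.Icc 1 n).filter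
    (fun p => p.1 < p.2 ∧ ∃ B ∈ A.parts, p.1 ∈ B ∧ p.2 ∈ B ∧
      ∀ k ∈ B, ¬ (p.1 < k ∧ k < p.2))

/-- The depth of a vertex `v`: the number of arcs `(i,j)` with `i < v < j`. -/
noncomputable def vertexDepth (n : ℕ) (A : Finpartition (Finset.Icc 1 n)) (v : ℕ) : ℕ :=
  ((arcs n A).filter (fun p => p.1 < v ∧ v < p.2)).card

/-- The depth of an arc `α = (u,v)`: the number of arcs `(i,j)` with `i < u < v < j`. -/
noncomputable def arcDepth (n : ℕ) (A : Finpartition (Finset.Icc 1 n)) (α : ℕ × ℕ) : ℕ :=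
  ((arcs n A).filter (fun p => p.1 < α.1 ∧ α.2 < p.2)).card

/-- The depth index `t(A) = Σ_{i=1}^m (n−i) − Σ_{v=1}^n depth(v) + Σ_{α} depth(α)`,
where `m` is the number of arcs of `A`. -/
noncomputable def depthIndex (n : ℕ) (A : Finpartition (Finset.Icc 1 n)) : ℤ :=
  (∑ i ∈ Finset.Icc 1 (arcs n A).card, ((n : ℤ) - (i : ℤ)))
    - ∑ v ∈ Finset.Icc 1 n, (vertexDepth n A v : ℤ)
    + ∑ α ∈ arcs n A, (arcDepth n A α : ℤ)

/-- The intertwining number of `A`: the sum over all unordered pairs of distinct blocks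
`{B, C}` of the number of pairs `(b,c) ∈ B × C` with no element of `B ∪ C` strictly between
them.  Since distinct blocks are disjoint, this equals the number of pairs `(x,y)` with
`x < y` lying in different blocks `B ∋ x`, `C ∋ y` such that no element of `B ∪ C` lies
strictly between `x` and `y`. -/
noncomputable def inumber (n : ℕ) (A : Finpartition (Finset.Icc 1 n)) : ℕ :=
  ((Finset.Icc 1 n ×ˢ Finset.Icc 1 n).filter
    (fun p => p.1 < p.2 ∧ ∃ B ∈ A.parts, ∃ C ∈ A.parts, B ≠ C ∧ p.1 ∈ B ∧ p.2 ∈ C ∧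
      ∀ k ∈ B ∪ C, ¬ (p.1 < k ∧ k < p.2))).card

/-- `u` and `v` lie in the same block of `A`. -/
def sameBlock (n : ℕ) (A : Finpartition (Finset.Icc 1 n)) (u v : ℕ) : Prop :=
  ∃ B ∈ A.parts, u ∈ B ∧ v ∈ B

/-- The partner of `v`: `0` if `v` is the minimum of its block, and otherwise the largest
element of the block of `v` smaller than `v`. -/
noncomputable def partner (n : ℕ) (A : Finpartition (Finset.Icc 1 n)) (v : ℕ) : ℕ :=
  ((Finset.Icc 1 n).filter (fun u => u < v ∧ sameBlock n A u v)).sup id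

/-- The partial depth index `t_v(A) = u + #{arcs (i,j) : u < i < j < v}`, where `u` is the
partner of `v`. -/
noncomputable def partialDepthIndex (n : ℕ) (A : Finpartition (Finset.Icc 1 n)) (v : ℕ) : ℕ :=
  partner n A v +
    ((arcs n A).filter (fun p => partner n A v < p.1 ∧ p.2 < v)).card

/-- The partial intertwining number `i_v(A)`: the number of `i` with `u < i < v` (where `u`
is the partner of `v`) such that `i` has no successor in its block, or the successor of `i`
in its block is greater than `v`; i.e. every element of the block of `i` larger than `i`
is larger than `v`. -/
noncomputable def partialInumber (n : ℕ) (A : Finpartition (Finset.Icc 1 n)) (v : ℕ) : ℕ :=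
  ((Finset.Icc 1 n).filter
    (fun i => partner n A v < i ∧ i < v ∧
      ∀ j, sameBlock n A i j → i < j → v < j)).card

/-- The adjacency matrix of `A`: the `n × n` rational matrix whose `(i,j)` entry is `1` if
`(i+1, j+1)` is an arc of `A` (indices shifted from `Fin n` to `{1,…,n}`) and `0` otherwise. -/
noncomputable def adjMatrix (n : ℕ) (A : Finpartition (Finset.Icc 1 n)) :
    Matrix (Fin n) (Fin n) ℚ :=
  fun i j => if ((i : ℕ) + 1, (j : ℕ) + 1) ∈ arcs n A then 1 else 0

/-- The rank-control matrix entry `r_{i,j}` of an `n × n` matrix `M`: the rank of the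
submatrix of `M` consisting of rows `{i, i+1, …, n}` and columns `{1, …, j}`
(in 1-based indexing). -/
noncomputable def rankControl (n : ℕ) (M : Matrix (Fin n) (Fin n) ℚ) (i j : ℕ) : ℕ :=
  (M.submatrix (fun k : {k : Fin n // i ≤ (k : ℕ) + 1} => (k : Fin n))
               (fun l : {l : Fin n // (l : ℕ) + 1 ≤ j} => (l : Fin n))).rank

end
section Aux

variable {n : ℕ} {A : Finpartition (Finset.Icc 1 n)}

lemma mem_arcs_iff {p : ℕ × ℕ} :
    p ∈ arcs n A ↔ p.1 ∈ Finset.Icc 1 n ∧ p.2 ∈ Finset.Icc 1 n ∧ p.1 < p.2 ∧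
      ∃ B ∈ A.parts, p.1 ∈ B ∧ p.2 ∈ B ∧ ∀ k ∈ B, ¬ (p.1 < k ∧ k < p.2) := by
  simp [arcs, Finset.mem_filter, Finset.mem_product, and_assoc]

lemma arcs_right_unique {a b b' : ℕ} (h : (a, b) ∈ arcs n A) (h' : (a, b') ∈ arcs n A) :
    b = b' := by
  obtain ⟨-, hb, hab, B, hB, haB, hbB, hno⟩ := mem_arcs_iff.1 h
  obtain ⟨-, hb', hab', B', hB', haB', hbB', hno'⟩ := mem_arcs_iff.1 h'
  have hBB : B = B' := A.eq_of_mem_parts hB hB' haB haB'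
  subst hBB
  rcases lt_trichotomy b b' with hlt | he | hlt
  · exact absurd ⟨hab, hlt⟩ (hno' b hbB)
  · exact he
  · exact absurd ⟨hab', hlt⟩ (hno b' hbB')

lemma arcs_left_unique {a a' b : ℕ} (h : (a, b) ∈ arcs n A) (h' : (a', b) ∈ arcs n A) :
    a = a' := by
  obtain ⟨ha, -, hab, B, hB, haB, hbB, hno⟩ := mem_arcs_iff.1 h
  obtain ⟨ha', -, hab', B', hB', haB', hbB', hno'⟩ := mem_arcs_iff.1 h'
  have hBB : B = B' := A.eq_of_mem_parts hB hB' hbB hbB'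
  subst hBB
  rcases lt_trichotomy a a' with hlt | he | hlt
  · exact absurd ⟨hlt, hab'⟩ (hno a' haB')
  · exact he
  · exact absurd ⟨hlt, hab⟩ (hno' a haB)

lemma partner_lt {v : ℕ} (hv : 1 ≤ v) : partner n A v < v := by
  rw [partner, Finset.sup_lt_iff (show (⊥ : ℕ) < v from hv)]
  intro u hu
  exact (Finset.mem_filter.1 hu).2.1

lemma le_partner {u v : ℕ} (hu : u ∈ Finset.Icc 1 n) (huv : u < v)
    (hsb : sameBlock n A u v) : u ≤ partner n A v :=
  Finset.le_sup (f := id) (Finset.mem_filter.2 ⟨hu, huv, hsb⟩)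

lemma partner_spec {v : ℕ} (h : 1 ≤ partner n A v) :
    partner n A v ∈
      (Finset.Icc 1 n).filter (fun u => u < v ∧ sameBlock n A u v) := by
  set s := (Finset.Icc 1 n).filter (fun u => u < v ∧ sameBlock n A u v) with hs
  rcases s.eq_empty_or_nonempty with he | hne
  · rw [partner, ← hs, he] at h; simp at h
  · obtain ⟨u, hu, he⟩ := Finset.exists_mem_eq_sup s hne id
    rw [partner, ← hs, he]
    exact hu

lemma sameBlock_symm {u v : ℕ} (h : sameBlock n A u v) : sameBlock n A v u := by
  obtain ⟨B, hB, h1, h2⟩ := h; exact ⟨B, hB, h2, h1⟩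

lemma exists_arc_succ {x j : ℕ} (hx : x ∈ Finset.Icc 1 n) (hsb : sameBlock n A x j)
    (hlt : x < j) : ∃ j0, j0 ≤ j ∧ (x, j0) ∈ arcs n A := by
  obtain ⟨B, hB, hxB, hjB⟩ := hsb
  set T := B.filter (fun y => x < y) with hT
  have hjT : j ∈ T := Finset.mem_filter.2 ⟨hjB, hlt⟩
  have hne : T.Nonempty := ⟨j, hjT⟩
  refine ⟨T.min' hne, T.min'_le j hjT, ?_⟩
  have hmem : T.min' hne ∈ B ∧ x < T.min' hne := Finset.mem_filter.1 (T.min'_mem hne)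
  refine mem_arcs_iff.2 ⟨hx, A.le hB hmem.1, hmem.2, B, hB, hxB, hmem.1, ?_⟩
  intro k hkB ⟨hk1, hk2⟩
  exact absurd (T.min'_le k (Finset.mem_filter.2 ⟨hkB, hk1⟩)) (not_le.2 hk2)

lemma partner_arc {v : ℕ} (hv : v ∈ Finset.Icc 1 n) (h : 1 ≤ partner n A v) :
    (partner n A v, v) ∈ arcs n A := by
  have hs := partner_spec (A := A) h
  rw [Finset.mem_filter] at hs
  obtain ⟨hu, huv, B, hB, huB, hvB⟩ := hs
  refine mem_arcs_iff.2 ⟨hu, hv, huv, B, hB, huB, hvB, ?_⟩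
  intro k hkB ⟨hk1, hk2⟩
  have hk : k ∈ Finset.Icc 1 n := A.le hB hkB
  have hk2' : k < v := hk2
  have := le_partner (A := A) hk hk2' ⟨B, hB, hkB, hvB⟩
  omega

lemma arc_partner {a v : ℕ} (h : (a, v) ∈ arcs n A) : partner n A v = a := by
  obtain ⟨ha, hv, hav, B, hB, haB, hvB, hno⟩ := mem_arcs_iff.1 h
  have h1 : a ≤ partner n A v := le_partner (A := A) ha hav ⟨B, hB, haB, hvB⟩
  have h2 : partner n A v ≤ a := by
    by_contra hc
    push_neg at hc
    have hp : 1 ≤ partner n A v := by omega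
    have hs := partner_spec (A := A) hp
    rw [Finset.mem_filter] at hs
    obtain ⟨hu, huv, C, hC, huC, hvC⟩ := hs
    have : B = C := A.eq_of_mem_parts hB hC hvB hvC
    subst this
    exact hno _ huC ⟨hc, huv⟩
  omega

end Aux

section Aux2

variable {n : ℕ} {A : Finpartition (Finset.Icc 1 n)}

lemma partial_sum_eq {v : ℕ} (hv : v ∈ Finset.Icc 1 n) :
    partialDepthIndex n A v + partialInumber n A v = v - 1 := by
  rw [Finset.mem_Icc] at hv
  set u := partner n A v with hu
  have huv : u < v := partner_lt hv.1
  set S := Finset.Icc (u + 1) (v - 1) with hS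
  set Q : ℕ → Prop := fun i => ∃ j, sameBlock n A i j ∧ i < j ∧ j ≤ v with hQ
  have hcard1 : ((arcs n A).filter (fun p => u < p.1 ∧ p.2 < v)).card
      = (S.filter Q).card := by
    refine Finset.card_bij (fun p _ => p.1) ?_ ?_ ?_
    · rintro p hp
      rw [Finset.mem_filter] at hp
      obtain ⟨hparc, hup, hpv⟩ := hp
      obtain ⟨h1, h2, h3, B, hB, haB, hbB, -⟩ := mem_arcs_iff.1 hparc
      refine Finset.mem_filter.2 ⟨Finset.mem_Icc.2 ⟨by omega, by omega⟩,
        p.2, ⟨B, hB, haB, hbB⟩, h3, by omega⟩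
    · rintro p hp q hq hpq
      rw [Finset.mem_filter] at hp hq
      have : (p.1, p.2) ∈ arcs n A := hp.1
      have h2 : (p.1, q.2) ∈ arcs n A := by rw [hpq]; exact hq.1
      have := arcs_right_unique this h2
      exact Prod.ext hpq this
    · rintro i hi
      rw [Finset.mem_filter] at hi
      obtain ⟨hiS, j, hsb, hij, hjv⟩ := hi
      rw [hS, Finset.mem_Icc] at hiS
      have hiIcc : i ∈ Finset.Icc 1 n := Finset.mem_Icc.2 ⟨by omega, by omega⟩
      obtain ⟨j0, hj0j, harc⟩ := exists_arc_succ hiIcc hsb hij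
      obtain ⟨-, -, hij0, B, hB, hiB, hj0B, -⟩ := mem_arcs_iff.1 harc
      have hj0v : j0 ≠ v := by
        intro he
        subst he
        have : i ≤ u := le_partner hiIcc hij0 ⟨B, hB, hiB, hj0B⟩
        omega
      refine ⟨(i, j0), Finset.mem_filter.2 ⟨harc, by omega, by omega⟩, rfl⟩
  have hcard2 : (S.filter (fun i => ¬ Q i)).card = partialInumber n A v := by
    rw [partialInumber]
    congr 1
    ext i
    simp only [Finset.mem_filter, hS, Finset.mem_Icc, hQ, not_exists]
    constructor
    · rintro ⟨hiS, hnq⟩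
      refine ⟨⟨by omega, by omega⟩, by omega, by omega, ?_⟩
      intro j hsb hij
      have := hnq j
      push_neg at this
      have := this hsb hij
      omega
    · rintro ⟨hmem, h1, h2, h3⟩
      refine ⟨⟨by omega, by omega⟩, ?_⟩
      intro j ⟨hsb, hij, hjv⟩
      have := h3 j hsb hij
      omega
  have hsplit := Finset.card_filter_add_card_filter_not (s := S) (p := Q)
  have hScard : S.card = v - 1 - u := by rw [hS, Nat.card_Icc]; omega
  have hdef : partialDepthIndex n A v
      = u + ((arcs n A).filter (fun p => u < p.1 ∧ p.2 < v)).card := rfl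
  omega

lemma inumber_eq_sum : inumber n A = ∑ v ∈ Finset.Icc 1 n, partialInumber n A v := by
  rw [inumber, Finset.card_filter, Finset.sum_product_right]
  refine Finset.sum_congr rfl fun v hv => ?_
  rw [← Finset.card_filter, partialInumber]
  congr 1
  refine Finset.filter_congr fun x hx => ?_
  constructor
  · rintro ⟨hxv, B, hB, C, hC, hBC, hxB, hvC, hno⟩
    have hpx : partner n A v < x := by
      by_contra hc
      push_neg at hc
      have hx1 : 1 ≤ x := (Finset.mem_Icc.1 hx).1
      have hp1 : 1 ≤ partner n A v := le_trans hx1 hc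
      have hs := partner_spec (A := A) hp1
      rw [Finset.mem_filter] at hs
      obtain ⟨hmem, hlt, D, hD, hpD, hvD⟩ := hs
      have hDC : D = C := A.eq_of_mem_parts hD hC hvD hvC
      subst hDC
      rcases eq_or_lt_of_le hc with he | hlt2
      · exact hBC (A.eq_of_mem_parts hB hD hxB (he ▸ hpD))
      · exact hno _ (Finset.mem_union_right _ hpD) ⟨hlt2, hlt⟩
    refine ⟨hpx, hxv, ?_⟩
    rintro j ⟨D, hD, hxD, hjD⟩ hxj
    have hDB : D = B := A.eq_of_mem_parts hD hB hxD hxB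
    subst hDB
    have hjv : j ≠ v := by
      intro he
      exact hBC (A.eq_of_mem_parts hD hC (he ▸ hjD) hvC)
    have := hno j (Finset.mem_union_left _ hjD)
    omega
  · rintro ⟨hpx, hxv, hall⟩
    obtain ⟨B, hB, hxB⟩ := A.exists_mem hx
    obtain ⟨C, hC, hvC⟩ := A.exists_mem hv
    have hBC : B ≠ C := by
      intro he
      subst he
      exact absurd (hall v ⟨B, hB, hxB, hvC⟩ hxv) (lt_irrefl v)
    refine ⟨hxv, B, hB, C, hC, hBC, hxB, hvC, ?_⟩
    intro k hk ⟨h1, h2⟩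
    rcases Finset.mem_union.1 hk with hkB | hkC
    · exact absurd (hall k ⟨B, hB, hxB, hkB⟩ h1) (by omega)
    · have hkIcc : k ∈ Finset.Icc 1 n := A.le hC hkC
      have h2' : k < v := h2
      have := le_partner hkIcc h2' ⟨C, hC, hkC, hvC⟩
      omega

end Aux2

noncomputable def dd (n : ℕ) (A : Finpartition (Finset.Icc 1 n)) (α : ℕ × ℕ) : ℕ :=
  ((arcs n A).filter (fun β => α.1 ≤ β.1 ∧ α.2 < β.2)).card

section Aux3

variable {n : ℕ} {A : Finpartition (Finset.Icc 1 n)}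

lemma gauss_sum (m : ℕ) : 2 * ∑ k ∈ Finset.Icc 1 m, k = m * m + m := by
  induction m with
  | zero => simp
  | succ m ih =>
    rw [Finset.sum_Icc_succ_top (by omega)]
    nlinarith [ih]

lemma sum_vertexDepth :
    ∑ v ∈ Finset.Icc 1 n, vertexDepth n A v + ∑ α ∈ arcs n A, (α.1 + 1)
      = ∑ α ∈ arcs n A, α.2 := by
  have h1 : ∑ v ∈ Finset.Icc 1 n, vertexDepth n A v
      = ∑ α ∈ arcs n A, ((Finset.Icc 1 n).filter (fun v => α.1 < v ∧ v < α.2)).card := by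
    simp only [vertexDepth, Finset.card_filter]
    exact Finset.sum_comm
  rw [h1, ← Finset.sum_add_distrib]
  refine Finset.sum_congr rfl fun α hα => ?_
  obtain ⟨h1, h2, h3, -⟩ := mem_arcs_iff.1 hα
  rw [Finset.mem_Icc] at h1 h2
  have he : (Finset.Icc 1 n).filter (fun v => α.1 < v ∧ v < α.2) = Finset.Ioo α.1 α.2 := by
    ext v
    simp only [Finset.mem_filter, Finset.mem_Icc, Finset.mem_Ioo]
    omega
  rw [he, Nat.card_Ioo]
  omega

lemma sum_partner :
    ∑ v ∈ Finset.Icc 1 n, partner n A v = ∑ α ∈ arcs n A, α.1 := by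
  have hinj : ∀ α ∈ arcs n A, ∀ β ∈ arcs n A, α.2 = β.2 → α = β := by
    intro α hα β hβ he
    have h1 : (α.1, α.2) ∈ arcs n A := by rwa [Prod.mk.eta]
    have h2 : (β.1, α.2) ∈ arcs n A := by rw [he, Prod.mk.eta]; exact hβ
    exact Prod.ext (arcs_left_unique h1 h2) he
  have h1 : ∑ α ∈ arcs n A, α.1 = ∑ α ∈ arcs n A, partner n A α.2 := by
    refine Finset.sum_congr rfl fun α hα => ?_
    exact (arc_partner (by rwa [Prod.mk.eta])).symm
  have h2 : ∑ α ∈ arcs n A, partner n A α.2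
      = ∑ v ∈ (arcs n A).image Prod.snd, partner n A v :=
    (Finset.sum_image hinj).symm
  rw [h1, h2]
  refine (Finset.sum_subset ?_ ?_).symm
  · intro v hv
    obtain ⟨α, hα, he⟩ := Finset.mem_image.1 hv
    obtain ⟨-, h2, -, -⟩ := mem_arcs_iff.1 hα
    exact he ▸ h2
  · intro v hv hnv
    by_contra hne
    have hp : 1 ≤ partner n A v := by omega
    have harc := partner_arc hv hp
    exact hnv (Finset.mem_image.2 ⟨(partner n A v, v), harc, rfl⟩)

lemma sum_c :
    ∑ v ∈ Finset.Icc 1 n,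
        ((arcs n A).filter (fun p => partner n A v < p.1 ∧ p.2 < v)).card
      + (∑ α ∈ arcs n A, dd n A α + ∑ α ∈ arcs n A, α.2)
      = (arcs n A).card * n := by
  have hswap : ∑ v ∈ Finset.Icc 1 n,
        ((arcs n A).filter (fun p => partner n A v < p.1 ∧ p.2 < v)).card
      = ∑ α ∈ arcs n A,
        ((Finset.Icc 1 n).filter (fun v => partner n A v < α.1 ∧ α.2 < v)).card := by
    simp only [Finset.card_filter]
    exact Finset.sum_comm
  rw [hswap, ← Finset.sum_add_distrib, ← Finset.sum_add_distrib]
  have hper : ∀ α ∈ arcs n A,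
      ((Finset.Icc 1 n).filter (fun v => partner n A v < α.1 ∧ α.2 < v)).card
        + (dd n A α + α.2) = n := by
    intro α hα
    obtain ⟨ha1, ha2, ha3, -⟩ := mem_arcs_iff.1 hα
    rw [Finset.mem_Icc] at ha1 ha2
    set W := (Finset.Icc 1 n).filter (fun v => α.2 < v) with hW
    have hWcard : W.card = n - α.2 := by
      have : W = Finset.Icc (α.2 + 1) n := by
        ext v
        simp only [hW, Finset.mem_filter, Finset.mem_Icc]
        omega
      rw [this, Nat.card_Icc]
      omega
    have hfe : (Finset.Icc 1 n).filter (fun v => partner n A v < α.1 ∧ α.2 < v)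
        = W.filter (fun v => partner n A v < α.1) := by
      rw [hW, Finset.filter_filter]
      refine Finset.filter_congr fun v hv => ?_
      tauto
    have hneg : (W.filter (fun v => ¬ partner n A v < α.1)).card = dd n A α := by
      rw [dd]
      refine (Finset.card_bij (fun β _ => β.2) ?_ ?_ ?_).symm
      · rintro β hβ
        rw [Finset.mem_filter] at hβ
        obtain ⟨hβarc, hle, hlt⟩ := hβ
        obtain ⟨-, hb2, -, -⟩ := mem_arcs_iff.1 hβarc
        have hp : partner n A β.2 = β.1 := arc_partner (by rwa [Prod.mk.eta])
        refine Finset.mem_filter.2 ⟨Finset.mem_filter.2 ⟨hb2, hlt⟩, ?_⟩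
        rw [hp]
        omega
      · rintro β hβ γ hγ he
        rw [Finset.mem_filter] at hβ hγ
        have h1 : (β.1, β.2) ∈ arcs n A := by rw [Prod.mk.eta]; exact hβ.1
        have h2 : (γ.1, β.2) ∈ arcs n A := by rw [he, Prod.mk.eta]; exact hγ.1
        exact Prod.ext (arcs_left_unique h1 h2) he
      · rintro v hv
        rw [Finset.mem_filter, hW, Finset.mem_filter] at hv
        obtain ⟨⟨hvIcc, hαv⟩, hnp⟩ := hv
        push_neg at hnp
        have hp1 : 1 ≤ partner n A v := le_trans ha1.1 hnp
        have harc := partner_arc hvIcc hp1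
        exact ⟨(partner n A v, v), Finset.mem_filter.2 ⟨harc, hnp, hαv⟩, rfl⟩
    have hsplit := Finset.card_filter_add_card_filter_not
      (s := W) (p := fun v => partner n A v < α.1)
    rw [hfe, hneg] at *
    omega
  rw [Finset.sum_congr rfl hper, Finset.sum_const, smul_eq_mul]

lemma sum_arcDepth_dd :
    ∑ α ∈ arcs n A, (arcDepth n A α + dd n A α)
      = ((arcs n A ×ˢ arcs n A).filter (fun q => q.1.2 < q.2.2)).card := by
  rw [Finset.card_filter, Finset.sum_product]
  refine Finset.sum_congr rfl fun α hα => ?_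
  rw [arcDepth, dd, Finset.card_filter, Finset.card_filter, ← Finset.sum_add_distrib]
  refine Finset.sum_congr rfl fun β hβ => ?_
  dsimp only
  split_ifs <;> omega

lemma two_Q :
    2 * ((arcs n A ×ˢ arcs n A).filter (fun q => q.1.2 < q.2.2)).card + (arcs n A).card
      = (arcs n A ×ˢ arcs n A).card := by
  have hinj : ∀ α ∈ arcs n A, ∀ β ∈ arcs n A, α.2 = β.2 → α = β := by
    intro α hα β hβ he
    have h1 : (α.1, α.2) ∈ arcs n A := by rwa [Prod.mk.eta]
    have h2 : (β.1, α.2) ∈ arcs n A := by rw [he, Prod.mk.eta]; exact hβ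
    exact Prod.ext (arcs_left_unique h1 h2) he
  have hdiag : ((arcs n A ×ˢ arcs n A).filter (fun q => q.1.2 = q.2.2)).card
      = (arcs n A).card := by
    refine (Finset.card_bij (fun a _ => (a, a)) ?_ ?_ ?_).symm
    · intro a ha
      exact Finset.mem_filter.2 ⟨Finset.mem_product.2 ⟨ha, ha⟩, rfl⟩
    · intro a _ b _ he
      exact (Prod.mk.injEq a a b b ▸ he).1
    · intro q hq
      rw [Finset.mem_filter, Finset.mem_product] at hq
      obtain ⟨⟨h1, h2⟩, he⟩ := hq
      refine ⟨q.1, h1, ?_⟩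
      have hq12 : q.1 = q.2 := hinj q.1 h1 q.2 h2 he
      exact Prod.ext rfl hq12
  have hgt : ((arcs n A ×ˢ arcs n A).filter (fun q => q.2.2 < q.1.2)).card
      = ((arcs n A ×ˢ arcs n A).filter (fun q => q.1.2 < q.2.2)).card := by
    refine Finset.card_bij (fun q _ => q.swap) ?_ ?_ ?_
    · intro q hq
      rw [Finset.mem_filter, Finset.mem_product] at hq
      exact Finset.mem_filter.2 ⟨Finset.mem_product.2 ⟨hq.1.2, hq.1.1⟩, hq.2⟩
    · intro q _ r _ he
      exact Prod.swap_injective he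
    · intro q hq
      rw [Finset.mem_filter, Finset.mem_product] at hq
      exact ⟨q.swap, Finset.mem_filter.2 ⟨Finset.mem_product.2 ⟨hq.1.2, hq.1.1⟩, hq.2⟩,
        Prod.swap_swap q⟩
  have htot : ((arcs n A ×ˢ arcs n A).filter (fun q => q.1.2 < q.2.2)).card
      + ((arcs n A ×ˢ arcs n A).filter (fun q => q.1.2 = q.2.2)).card
      + ((arcs n A ×ˢ arcs n A).filter (fun q => q.2.2 < q.1.2)).card
      = (arcs n A ×ˢ arcs n A).card := by
    rw [Finset.card_filter, Finset.card_filter, Finset.card_filter,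
      ← Finset.sum_add_distrib, ← Finset.sum_add_distrib]
    rw [show (arcs n A ×ˢ arcs n A).card = ∑ _q ∈ arcs n A ×ˢ arcs n A, 1 from
      (Finset.card_eq_sum_ones _)]
    refine Finset.sum_congr rfl fun q _ => ?_
    split_ifs <;> omega
  omega

lemma depthIndex_eq_sum :
    depthIndex n A = ∑ v ∈ Finset.Icc 1 n, (partialDepthIndex n A v : ℤ) := by
  have hm : (Finset.Icc 1 (arcs n A).card).card = (arcs n A).card := by
    rw [Nat.card_Icc]; omega
  have hF6 : ∑ k ∈ Finset.Icc 1 (arcs n A).card, ((n : ℤ) - (k : ℤ))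
      = ((arcs n A).card : ℤ) * n - ∑ k ∈ Finset.Icc 1 (arcs n A).card, (k : ℤ) := by
    rw [Finset.sum_sub_distrib, Finset.sum_const, hm, nsmul_eq_mul]
  have hgauss := congrArg (Nat.cast : ℕ → ℤ) (gauss_sum (arcs n A).card)
  push_cast at hgauss
  have hVD := congrArg (Nat.cast : ℕ → ℤ) (sum_vertexDepth (n := n) (A := A))
  push_cast at hVD
  rw [Finset.sum_add_distrib, Finset.sum_const, nsmul_eq_mul, mul_one] at hVD
  have hPt := congrArg (Nat.cast : ℕ → ℤ) (sum_partner (n := n) (A := A))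
  push_cast at hPt
  have hC := congrArg (Nat.cast : ℕ → ℤ) (sum_c (n := n) (A := A))
  push_cast at hC
  have hAD := congrArg (Nat.cast : ℕ → ℤ) (sum_arcDepth_dd (n := n) (A := A))
  push_cast at hAD
  rw [Finset.sum_add_distrib] at hAD
  have hQ := congrArg (Nat.cast : ℕ → ℤ) (two_Q (n := n) (A := A))
  push_cast at hQ
  have hP2 := congrArg (Nat.cast : ℕ → ℤ)
    (Finset.card_product (arcs n A) (arcs n A))
  push_cast at hP2
  have hRHS : ∑ v ∈ Finset.Icc 1 n, (partialDepthIndex n A v : ℤ)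
      = ∑ v ∈ Finset.Icc 1 n, (partner n A v : ℤ)
        + ∑ v ∈ Finset.Icc 1 n,
            (((arcs n A).filter (fun p => partner n A v < p.1 ∧ p.2 < v)).card : ℤ) := by
    rw [← Finset.sum_add_distrib]
    refine Finset.sum_congr rfl fun v _ => ?_
    rw [partialDepthIndex]
    push_cast
    ring
  rw [depthIndex, hF6, hRHS]
  linarith

end Aux3

/-- For `n ≥ 1` and a set partition `A` of `{1,…,n}`, the depth index and
the intertwining number satisfy `t(A) + i(A) = n(n−1)/2`. -/
theorem depthIndex_add_inumber (n : ℕ) (hn : 1 ≤ n) (A : Finpartition (Finset.Icc 1 n)) :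
    depthIndex n A + (inumber n A : ℤ) = ((n * (n - 1) / 2 : ℕ) : ℤ) := by
  have hsum : ∑ v ∈ Finset.Icc 1 n, (partialDepthIndex n A v + partialInumber n A v)
      = ∑ v ∈ Finset.Icc 1 n, (v - 1) :=
    Finset.sum_congr rfl fun v hv => partial_sum_eq hv
  have hre : ∑ v ∈ Finset.Icc 1 n, (v - 1) = ∑ i ∈ Finset.range n, i := by
    have him : Finset.Icc 1 n = (Finset.range n).image (fun i => i + 1) := by
      ext v
      simp only [Finset.mem_Icc, Finset.mem_image, Finset.mem_range]
      constructor
      · intro h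
        exact ⟨v - 1, by omega, by omega⟩
      · rintro ⟨i, hi, rfl⟩
        omega
    rw [him, Finset.sum_image (by intro a _ b _ h; simp only at h; omega)]
    simp
  rw [depthIndex_eq_sum, inumber_eq_sum]
  have hcast : ∑ v ∈ Finset.Icc 1 n, (partialDepthIndex n A v : ℤ)
      + ((∑ v ∈ Finset.Icc 1 n, partialInumber n A v : ℕ) : ℤ)
      = ((∑ v ∈ Finset.Icc 1 n, (partialDepthIndex n A v + partialInumber n A v) : ℕ) : ℤ) := by
    push_cast
    rw [Finset.sum_add_distrib]
  rw [hcast, hsum, hre, Finset.sum_range_id]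
end

section
/- Let n ≥ 1 and let A be a set partition of {1,…,n}. Then the depth index of A equals the sum of the partial depth indices: t(A) = Σ_{v=1}^n t_v(A). -/
open Finset
open scoped Classical

noncomputable section

section Aux
variable {n : ℕ} {A : Finpartition (Finset.Icc 1 n)}

lemma mem_arcs_dest {p : ℕ × ℕ} (hp : p ∈ arcs n A) :
    p.1 ∈ Finset.Icc 1 n ∧ p.2 ∈ Finset.Icc 1 n ∧ p.1 < p.2 := by
  simp only [arcs, Finset.mem_filter, Finset.mem_product] at hp
  exact ⟨hp.1.1, hp.1.2, hp.2.1⟩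

lemma partner_arc_s1 {a b : ℕ} (h : (a, b) ∈ arcs n A) : partner n A b = a := by
  simp only [arcs, Finset.mem_filter, Finset.mem_product] at h
  obtain ⟨⟨ha, hb⟩, hab, B, hB, haB, hbB, hno⟩ := h
  apply le_antisymm
  · apply Finset.sup_le
    intro u hu
    simp only [Finset.mem_filter] at hu
    obtain ⟨huI, huv, C, hC, huC, hbC⟩ := hu
    have : B = C := A.eq_of_mem_parts hB hC hbB hbC
    subst this
    by_contra hlt
    exact hno u huC ⟨lt_of_not_ge hlt, huv⟩
  · exact Finset.le_sup (f := id) (by simp only [Finset.mem_filter]; exact ⟨ha, hab, B, hB, haB, hbB⟩)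

lemma partner_mem_arc {v : ℕ} (hv : v ∈ Finset.Icc 1 n) (h : partner n A v ≠ 0) :
    (partner n A v, v) ∈ arcs n A := by
  set T := (Finset.Icc 1 n).filter (fun u => u < v ∧ sameBlock n A u v) with hT
  have hne : T.Nonempty := by
    rcases T.eq_empty_or_nonempty with he | hne
    · exfalso; apply h; simp [partner, ← hT, he]
    · exact hne
  have hmem : partner n A v ∈ T := by
    have h1 : partner n A v = T.max' hne := by
      rw [Finset.max'_eq_sup', Finset.sup'_eq_sup]; rfl
    rw [h1]; exact T.max'_mem hne
  have hsup : ∀ u ∈ T, u ≤ partner n A v := fun u hu => Finset.le_sup (f := id) hu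
  simp only [hT, Finset.mem_filter] at hmem
  obtain ⟨hpI, hpv, B, hB, hpB, hvB⟩ := hmem
  simp only [arcs, Finset.mem_filter, Finset.mem_product]
  refine ⟨⟨hpI, hv⟩, hpv, B, hB, hpB, hvB, ?_⟩
  intro k hkB ⟨hk1, hk2⟩
  have hkT : k ∈ T := by
    simp only [hT, Finset.mem_filter]
    exact ⟨A.le hB hkB, hk2, B, hB, hkB, hvB⟩
  exact absurd (hsup k hkT) (not_le.mpr hk1)
lemma arcs_snd_inj {p q : ℕ × ℕ} (hp : p ∈ arcs n A) (hq : q ∈ arcs n A)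
    (h : p.2 = q.2) : p = q := by
  have h1 : partner n A p.2 = p.1 := partner_arc_s1 (by rwa [Prod.mk.eta])
  have h2 : partner n A q.2 = q.1 := partner_arc_s1 (by rwa [Prod.mk.eta])
  have : p.1 = q.1 := by rw [← h1, ← h2, h]
  exact Prod.ext this h

/-- Bijection between `{v ∈ Icc 1 n : P (partner v) v}` and `{p ∈ arcs : P p.1 p.2}`
when `P u v → 1 ≤ u`. -/
lemma card_filter_partner (P : ℕ → ℕ → Prop) [∀ u v, Decidable (P u v)] (hP : ∀ u v, P u v → 1 ≤ u) :
    ((Finset.Icc 1 n).filter (fun v => P (partner n A v) v)).card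
      = ((arcs n A).filter (fun p => P p.1 p.2)).card := by
  apply Finset.card_nbij' (fun v => (partner n A v, v)) (fun p => p.2)
  · intro v hv
    simp only [Finset.mem_coe, Finset.mem_filter] at hv ⊢
    refine ⟨partner_mem_arc hv.1 ?_, hv.2⟩
    have := hP _ _ hv.2; omega
  · intro p hp
    simp only [Finset.mem_coe, Finset.mem_filter] at hp ⊢
    have h1 : partner n A p.2 = p.1 := partner_arc_s1 (by rw [Prod.mk.eta]; exact hp.1)
    exact ⟨(mem_arcs_dest hp.1).2.1, by rw [h1]; exact hp.2⟩
  · intro v hv; rfl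
  · intro p hp
    simp only [Finset.mem_coe, Finset.mem_filter] at hp
    have h1 : partner n A p.2 = p.1 := partner_arc_s1 (by rw [Prod.mk.eta]; exact hp.1)
    dsimp only
    rw [h1]

lemma sum_partner_eq : ∑ v ∈ Finset.Icc 1 n, partner n A v = ∑ p ∈ arcs n A, p.1 := by
  rw [← Finset.sum_filter_ne_zero (Finset.Icc 1 n)]
  apply Finset.sum_nbij' (fun v => (partner n A v, v)) (fun p => p.2)
  · intro v hv
    simp only [Finset.mem_filter] at hv
    exact partner_mem_arc hv.1 hv.2
  · intro p hp
    simp only [Finset.mem_filter]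
    have h1 : partner n A p.2 = p.1 := partner_arc_s1 (by rw [Prod.mk.eta]; exact hp)
    have := (mem_arcs_dest hp).1
    simp only [Finset.mem_Icc] at this
    exact ⟨(mem_arcs_dest hp).2.1, by rw [h1]; omega⟩
  · intro v hv; rfl
  · intro p hp
    have h1 : partner n A p.2 = p.1 := partner_arc_s1 (by rw [Prod.mk.eta]; exact hp)
    exact Prod.ext h1 rfl
  · intro v hv; rfl
lemma sum_card_swap {α β : Type*} (s : Finset α) (t : Finset β) (P : α → β → Prop)
    [∀ a b, Decidable (P a b)] :
    ∑ a ∈ s, ((t.filter (P a)).card) = ∑ b ∈ t, ((s.filter (fun a => P a b)).card) := by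
  simp only [Finset.card_filter]
  rw [Finset.sum_comm]

lemma sum_card_prod {α β : Type*} (s : Finset α) (t : Finset β) (P : α → β → Prop)
    [∀ a b, Decidable (P a b)] :
    ∑ a ∈ s, ((t.filter (P a)).card) = ((s ×ˢ t).filter (fun q => P q.1 q.2)).card := by
  rw [Finset.card_filter, Finset.sum_product]
  refine Finset.sum_congr rfl fun a _ => ?_
  rw [Finset.card_filter]

lemma count_above (p : ℕ × ℕ) (hp : p ∈ arcs n A) :
    ((Finset.Icc 1 n).filter (fun v => partner n A v < p.1 ∧ p.2 < v)).card
      + ((arcs n A).filter (fun q => p.1 ≤ q.1 ∧ p.2 < q.2)).card + p.2 = n := by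
  obtain ⟨h1, h2, h3⟩ := mem_arcs_dest hp
  simp only [Finset.mem_Icc] at h1 h2
  have hB : ((Finset.Icc 1 n).filter (fun v => p.2 < v ∧ p.1 ≤ partner n A v)).card
      = ((arcs n A).filter (fun q => p.2 < q.2 ∧ p.1 ≤ q.1)).card :=
    card_filter_partner (n := n) (A := A) (fun u v => p.2 < v ∧ p.1 ≤ u)
      (fun u v h => le_trans h1.1 h.2)
  have hBr : ((arcs n A).filter (fun q => p.2 < q.2 ∧ p.1 ≤ q.1)).card
      = ((arcs n A).filter (fun q => p.1 ≤ q.1 ∧ p.2 < q.2)).card := by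
    congr 1; apply Finset.filter_congr; intro q _; exact and_comm
  have hCr : ((Finset.Icc 1 n).filter (fun v => partner n A v < p.1 ∧ p.2 < v)).card
      = ((Finset.Icc 1 n).filter (fun v => p.2 < v ∧ ¬ p.1 ≤ partner n A v)).card := by
    congr 1; apply Finset.filter_congr; intro q _; simp [not_le]; tauto
  have hsplit := Finset.card_filter_add_card_filter_not
    (s := (Finset.Icc 1 n).filter (fun v => p.2 < v)) (p := fun v => p.1 ≤ partner n A v)
  rw [Finset.filter_filter, Finset.filter_filter] at hsplit
  have hT : ((Finset.Icc 1 n).filter (fun v => p.2 < v)) = Finset.Ioc p.2 n := by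
    ext v; simp only [Finset.mem_filter, Finset.mem_Icc, Finset.mem_Ioc]; omega
  rw [hT, Nat.card_Ioc] at hsplit
  rw [hCr, ← hBr]
  omega

end Aux
end
/-- For `n ≥ 1` and a set partition `A` of `{1,…,n}`, the depth index equals
the sum of the partial depth indices: `t(A) = Σ_{v=1}^n t_v(A)`. -/
theorem depthIndex_eq_sum_partialDepthIndex (n : ℕ) (hn : 1 ≤ n)
    (A : Finpartition (Finset.Icc 1 n)) :
    depthIndex n A = ∑ v ∈ Finset.Icc 1 n, (partialDepthIndex n A v : ℤ) := by
  classical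
  set S := arcs n A with hS
  set m := S.card with hm
  -- abbreviations
  set SI : ℕ := ∑ i ∈ Finset.Icc 1 m, i with hSI
  set s1 : ℤ := ∑ p ∈ S, (p.1 : ℤ) with hs1
  set s2 : ℤ := ∑ p ∈ S, (p.2 : ℤ) with hs2
  set nest : ℕ := ((S ×ˢ S).filter (fun q => q.2.1 < q.1.1 ∧ q.1.2 < q.2.2)).card with hnest
  set bigN : ℕ := ((S ×ˢ S).filter (fun q => q.1.1 ≤ q.2.1 ∧ q.1.2 < q.2.2)).card with hbigN
  set K : ℕ := ((S ×ˢ S).filter (fun q => q.1.2 < q.2.2)).card with hK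
  -- Gauss
  have hGauss : 2 * SI = m * (m + 1) := by
    have he : Finset.Icc 1 m = (Finset.range (m+1)).filter (fun i => i ≠ 0) := by
      ext i; simp [Finset.mem_Icc, Finset.mem_range]; omega
    have h0 : SI = ∑ i ∈ Finset.range (m+1), i := by
      rw [hSI, he, Finset.sum_filter_ne_zero]
    calc 2 * SI = (∑ i ∈ Finset.range (m+1), i) * 2 := by rw [h0]; ring
      _ = (m+1) * m := Finset.sum_range_id_mul_two _
      _ = m * (m+1) := by ring
  -- diagonal count
  have hD : ((S ×ˢ S).filter (fun q => q.1.2 = q.2.2)).card = m := by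
    apply Finset.card_nbij' (fun q => q.1) (fun p => (p, p))
    · intro q hq
      simp only [Finset.mem_coe, Finset.mem_filter, Finset.mem_product] at hq
      exact hq.1.1
    · intro p hp
      simp only [Finset.mem_coe, Finset.mem_filter, Finset.mem_product]
      exact ⟨⟨hp, hp⟩, trivial⟩
    · intro q hq
      simp only [Finset.mem_coe, Finset.mem_filter, Finset.mem_product] at hq
      have h := arcs_snd_inj hq.1.1 hq.1.2 hq.2
      rw [← Prod.mk.eta (p := q), ← h]
    · intro p _; rfl
  -- swap
  have hKK : K = ((S ×ˢ S).filter (fun q => q.2.2 < q.1.2)).card := by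
    rw [hK]
    apply Finset.card_nbij' Prod.swap Prod.swap
    · intro q hq
      simp only [Finset.mem_coe, Finset.mem_filter, Finset.mem_product] at hq ⊢
      exact ⟨⟨hq.1.2, hq.1.1⟩, hq.2⟩
    · intro q hq
      simp only [Finset.mem_coe, Finset.mem_filter, Finset.mem_product] at hq ⊢
      exact ⟨⟨hq.1.2, hq.1.1⟩, hq.2⟩
    · intro q _; rfl
    · intro q _; rfl
  -- trichotomy
  have htri : K + ((S ×ˢ S).filter (fun q => q.2.2 < q.1.2)).card
      + ((S ×ˢ S).filter (fun q => q.1.2 = q.2.2)).card = m * m := by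
    rw [hK, Finset.card_filter, Finset.card_filter, Finset.card_filter,
      ← Finset.sum_add_distrib, ← Finset.sum_add_distrib]
    have : (m * m : ℕ) = ∑ _q ∈ S ×ˢ S, 1 := by
      rw [Finset.sum_const, smul_eq_mul, mul_one, Finset.card_product]
    rw [this]
    apply Finset.sum_congr rfl
    intro q _
    split_ifs <;> omega
  have hK2 : 2 * K + m = m * m := by omega
  -- split of K
  have hK1 : bigN + nest = K := by
    rw [hbigN, hnest, hK, Finset.card_filter, Finset.card_filter, Finset.card_filter,
      ← Finset.sum_add_distrib]
    apply Finset.sum_congr rfl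
    intro q _
    split_ifs <;> omega
  -- vertex depth sum
  have hdepth : ∑ v ∈ Finset.Icc 1 n, (vertexDepth n A v : ℤ) = s2 - s1 - m := by
    have h1 : ∑ v ∈ Finset.Icc 1 n, vertexDepth n A v
        = ∑ p ∈ S, ((Finset.Icc 1 n).filter (fun v => p.1 < v ∧ v < p.2)).card := by
      simp only [vertexDepth]
      exact sum_card_swap (Finset.Icc 1 n) S (fun v p => p.1 < v ∧ v < p.2)
    have h2 : ∀ p ∈ S, (((Finset.Icc 1 n).filter (fun v => p.1 < v ∧ v < p.2)).card : ℤ)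
        = (p.2 : ℤ) - p.1 - 1 := by
      intro p hp
      obtain ⟨hp1, hp2, hp3⟩ := mem_arcs_dest hp
      simp only [Finset.mem_Icc] at hp1 hp2
      have he : (Finset.Icc 1 n).filter (fun v => p.1 < v ∧ v < p.2) = Finset.Ioo p.1 p.2 := by
        ext v; simp only [Finset.mem_filter, Finset.mem_Icc, Finset.mem_Ioo]; omega
      rw [he, Nat.card_Ioo]; omega
    calc ∑ v ∈ Finset.Icc 1 n, (vertexDepth n A v : ℤ)
        = ((∑ v ∈ Finset.Icc 1 n, vertexDepth n A v : ℕ) : ℤ) := by push_cast; ring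
      _ = ∑ p ∈ S, (((Finset.Icc 1 n).filter (fun v => p.1 < v ∧ v < p.2)).card : ℤ) := by
          rw [h1]; push_cast; ring
      _ = ∑ p ∈ S, ((p.2 : ℤ) - p.1 - 1) := Finset.sum_congr rfl h2
      _ = s2 - s1 - m := by
          rw [Finset.sum_sub_distrib, Finset.sum_sub_distrib, Finset.sum_const, hs1, hs2, hm]
          push_cast; ring
  -- arc depth sum
  have hnest' : ∑ α ∈ S, (arcDepth n A α : ℤ) = (nest : ℤ) := by
    have : ∑ α ∈ S, arcDepth n A α = nest := by
      simp only [arcDepth, hnest]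
      exact sum_card_prod S S (fun a p => p.1 < a.1 ∧ a.2 < p.2)
    rw [← this]; push_cast; ring
  -- Gauss sum in ℤ
  have hG : ∑ i ∈ Finset.Icc 1 m, ((n : ℤ) - (i : ℤ)) = (m : ℤ) * n - SI := by
    rw [Finset.sum_sub_distrib, Finset.sum_const, Nat.card_Icc, hSI]
    push_cast [Nat.add_sub_cancel]
    ring
  -- RHS
  have hpart : ∑ v ∈ Finset.Icc 1 n, (partner n A v : ℤ) = s1 := by
    have := sum_partner_eq (n := n) (A := A)
    rw [hs1, hS]
    exact_mod_cast this
  have hX : ∑ v ∈ Finset.Icc 1 n,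
      (((arcs n A).filter (fun p => partner n A v < p.1 ∧ p.2 < v)).card : ℤ)
      = (m : ℤ) * n - s2 - bigN := by
    rw [← hS]
    have h1 : ∑ v ∈ Finset.Icc 1 n,
        (S.filter (fun p => partner n A v < p.1 ∧ p.2 < v)).card
        = ∑ p ∈ S, ((Finset.Icc 1 n).filter
            (fun v => partner n A v < p.1 ∧ p.2 < v)).card := by
      exact sum_card_swap (Finset.Icc 1 n) S (fun v p => partner n A v < p.1 ∧ p.2 < v)
    have h2 : ∀ p ∈ S, (((Finset.Icc 1 n).filter
        (fun v => partner n A v < p.1 ∧ p.2 < v)).card : ℤ)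
        = (n : ℤ) - p.2 - ((S.filter (fun q => p.1 ≤ q.1 ∧ p.2 < q.2)).card : ℤ) := by
      intro p hp
      have := count_above (n := n) (A := A) p hp
      rw [← hS] at this
      omega
    have h3 : ∑ p ∈ S, (S.filter (fun q => p.1 ≤ q.1 ∧ p.2 < q.2)).card = bigN := by
      rw [hbigN]
      exact sum_card_prod S S (fun a q => a.1 ≤ q.1 ∧ a.2 < q.2)
    calc ∑ v ∈ Finset.Icc 1 n,
        ((S.filter (fun p => partner n A v < p.1 ∧ p.2 < v)).card : ℤ)
        = ∑ p ∈ S, (((Finset.Icc 1 n).filter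
            (fun v => partner n A v < p.1 ∧ p.2 < v)).card : ℤ) := by
          exact_mod_cast h1
      _ = ∑ p ∈ S, ((n : ℤ) - p.2 - ((S.filter (fun q => p.1 ≤ q.1 ∧ p.2 < q.2)).card : ℤ)) :=
          Finset.sum_congr rfl h2
      _ = (m : ℤ) * n - s2 - bigN := by
          rw [Finset.sum_sub_distrib, Finset.sum_sub_distrib, Finset.sum_const, hs2, hm, ← h3]
          push_cast
          ring
  -- assemble
  have hRHS : ∑ v ∈ Finset.Icc 1 n, (partialDepthIndex n A v : ℤ)
      = s1 + ((m : ℤ) * n - s2 - bigN) := by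
    simp only [partialDepthIndex, Nat.cast_add]
    rw [Finset.sum_add_distrib, hpart, hX]
  rw [hRHS]
  simp only [depthIndex, ← hS, ← hm]
  rw [hG, hdepth, hnest']
  have hGaussZ : 2 * (SI : ℤ) = (m : ℤ) * m + m := by
    have : ((2 * SI : ℕ) : ℤ) = ((m * (m+1) : ℕ) : ℤ) := by rw [hGauss]
    push_cast at this
    linarith [this]
  have hK1Z : (bigN : ℤ) + nest = K := by exact_mod_cast congrArg (Nat.cast : ℕ → ℤ) hK1
  have hK2Z : 2 * (K : ℤ) + m = (m : ℤ) * m := by exact_mod_cast congrArg (Nat.cast : ℕ → ℤ) hK2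
  linarith
end

section
/- Let n ≥ 1, let A be a set partition of {1,…,n}, and let v ∈ {1,…,n}. Then the partial depth index and the partial intertwining number at v satisfy t_v(A) + i_v(A) = v − 1. -/
open Finset
open scoped Classical

/-- For `n ≥ 1`, a set partition `A` of `{1,…,n}` and `v ∈ {1,…,n}`,
the partial depth index and partial intertwining number at `v` satisfy
`t_v(A) + i_v(A) = v − 1`. -/
theorem partialDepthIndex_add_partialInumber (n : ℕ) (hn : 1 ≤ n)
    (A : Finpartition (Finset.Icc 1 n)) (v : ℕ) (hv : v ∈ Finset.Icc 1 n) :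
    partialDepthIndex n A v + partialInumber n A v = v - 1 := by
  classical
  obtain ⟨hv1, hvn⟩ := Finset.mem_Icc.mp hv
  set u := partner n A v with hu
  have huv : u < v := by
    rw [hu, partner]
    refine (Finset.sup_lt_iff (show (⊥ : ℕ) < v from by simp only [bot_eq_zero]; omega)).mpr ?_
    intro b hb
    simp only [Finset.mem_filter] at hb
    exact hb.2.1
  have hle : ∀ i, i ∈ Finset.Icc 1 n → i < v → sameBlock n A i v → i ≤ u := by
    intro i hi hilt hsb
    exact Finset.le_sup (f := id) (Finset.mem_filter.mpr ⟨hi, hilt, hsb⟩)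
  have hIooIcc : ∀ i, u < i → i < v → i ∈ Finset.Icc 1 n := by
    intro i h1 h2; rw [Finset.mem_Icc]; omega
  set P : ℕ → Prop := fun i => ∀ j, sameBlock n A i j → i < j → v < j with hP
  have hInum : partialInumber n A v = ((Finset.Ioo u v).filter P).card := by
    unfold partialInumber
    congr 1
    ext i
    simp only [Finset.mem_filter, Finset.mem_Icc, Finset.mem_Ioo, hP]
    constructor
    · rintro ⟨_, h1, h2, h3⟩; exact ⟨⟨h1, h2⟩, h3⟩
    · rintro ⟨⟨h1, h2⟩, h3⟩
      have := Finset.mem_Icc.mp (hIooIcc i h1 h2)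
      exact ⟨this, h1, h2, h3⟩
  have hArcs : ((arcs n A).filter (fun p => u < p.1 ∧ p.2 < v)).card
      = ((Finset.Ioo u v).filter (fun i => ¬ P i)).card := by
    apply Finset.card_bij (fun p _ => p.1)
    · intro p hp
      simp only [Finset.mem_filter] at hp ⊢
      obtain ⟨hpa, hu1, hv2⟩ := hp
      unfold arcs at hpa
      simp only [Finset.mem_filter, Finset.mem_product] at hpa
      obtain ⟨⟨hp1, hp2⟩, h12, B, hB, hB1, hB2, hBn⟩ := hpa
      refine ⟨Finset.mem_Ioo.mpr ⟨hu1, lt_trans h12 hv2⟩, ?_⟩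
      intro hPp
      have := hPp p.2 ⟨B, hB, hB1, hB2⟩ h12
      omega
    · intro p hp q hq hpq
      simp only [Finset.mem_filter] at hp hq
      obtain ⟨hpa, _, _⟩ := hp
      obtain ⟨hqa, _, _⟩ := hq
      unfold arcs at hpa hqa
      simp only [Finset.mem_filter, Finset.mem_product] at hpa hqa
      obtain ⟨_, hp12, B, hB, hB1, hB2, hBn⟩ := hpa
      obtain ⟨_, hq12, C, hC, hC1, hC2, hCn⟩ := hqa
      have hBC : B = C := A.eq_of_mem_parts hB hC hB1 (hpq ▸ hC1)
      subst hBC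
      have h2 : p.2 = q.2 := by
        rcases lt_trichotomy p.2 q.2 with h | h | h
        · have := hCn p.2 hB2; omega
        · exact h
        · have := hBn q.2 hC2; omega
      exact Prod.ext hpq h2
    · intro i hi
      simp only [Finset.mem_filter, Finset.mem_Ioo, hP] at hi
      obtain ⟨⟨hui, hiv⟩, hnP⟩ := hi
      push_neg at hnP
      obtain ⟨j, hsb, hij, hjv⟩ := hnP
      obtain ⟨B, hB, hiB, hjB⟩ := hsb
      set T := B.filter (fun k => i < k) with hT
      have hTne : T.Nonempty := ⟨j, Finset.mem_filter.mpr ⟨hjB, hij⟩⟩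
      set j₀ := T.min' hTne with hj₀
      have hj₀T : j₀ ∈ T := T.min'_mem hTne
      have hj₀B : j₀ ∈ B := (Finset.mem_filter.mp hj₀T).1
      have hij₀ : i < j₀ := (Finset.mem_filter.mp hj₀T).2
      have hj₀j : j₀ ≤ j := T.min'_le j (Finset.mem_filter.mpr ⟨hjB, hij⟩)
      have hiIcc : i ∈ Finset.Icc 1 n := hIooIcc i hui hiv
      have hj₀Icc : j₀ ∈ Finset.Icc 1 n := A.le hB hj₀B
      have hj₀v : j₀ < v := by
        rcases lt_or_ge j₀ v with h | h
        · exact h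
        · have hj₀eq : j₀ = v := le_antisymm (le_trans hj₀j hjv) h
          have : i ≤ u := hle i hiIcc hiv ⟨B, hB, hiB, hj₀eq ▸ hj₀B⟩
          omega
      refine ⟨(i, j₀), ?_, rfl⟩
      simp only [Finset.mem_filter]
      refine ⟨?_, hui, hj₀v⟩
      unfold arcs
      simp only [Finset.mem_filter, Finset.mem_product]
      refine ⟨⟨hiIcc, hj₀Icc⟩, hij₀, B, hB, hiB, hj₀B, ?_⟩
      intro k hkB ⟨hik, hkj₀⟩
      have : j₀ ≤ k := T.min'_le k (Finset.mem_filter.mpr ⟨hkB, hik⟩)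
      omega
  have hsplit : ((Finset.Ioo u v).filter P).card
      + ((Finset.Ioo u v).filter (fun i => ¬ P i)).card = (Finset.Ioo u v).card :=
    Finset.card_filter_add_card_filter_not (fun i => P i)
  have hcard : (Finset.Ioo u v).card = v - u - 1 := Nat.card_Ioo u v
  unfold partialDepthIndex
  rw [← hu, hArcs, hInum]
  omega
end

section
/- Let n ≥ 1 and let A be a set partition of {1,…,n}. Then the intertwining number of A equals the sum of the partial intertwining numbers: i(A) = Σ_{v=1}^n i_v(A). -/
open Finset
open scoped Classical

/-- For `n ≥ 1` and a set partition `A` of `{1,…,n}`, the intertwining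
number equals the sum of the partial intertwining numbers: `i(A) = Σ_{v=1}^n i_v(A)`. -/
theorem inumber_eq_sum_partialInumber (n : ℕ) (hn : 1 ≤ n)
    (A : Finpartition (Finset.Icc 1 n)) :
    inumber n A = ∑ v ∈ Finset.Icc 1 n, partialInumber n A v := by
  classical
  unfold inumber
  rw [Finset.card_eq_sum_card_fiberwise (f := Prod.snd) (t := Finset.Icc 1 n)
    (fun p hp => (Finset.mem_product.1 (Finset.mem_filter.1 hp).1).2)]
  refine Finset.sum_congr rfl fun v hv => ?_
  unfold partialInumber
  refine Finset.card_bij' (fun p _ => p.1) (fun x _ => (x, v)) ?_ ?_ ?_ ?_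
  · -- forward
    intro p hp
    rw [Finset.mem_filter] at hp
    obtain ⟨hpS, hpv⟩ := hp
    rw [Finset.mem_filter] at hpS
    obtain ⟨hpProd, hlt, B, hB, C, hC, hBC, hxB, hyC, hbet⟩ := hpS
    obtain ⟨hx1, hx2⟩ := Finset.mem_product.1 hpProd
    subst hpv
    have hx1' : 1 ≤ p.1 := (Finset.mem_Icc.1 hx1).1
    rw [Finset.mem_filter]
    refine ⟨hx1, ?_, hlt, ?_⟩
    · -- partner < p.1
      unfold partner
      rw [Finset.sup_lt_iff (show (⊥ : ℕ) < p.1 from hx1')]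
      intro u hu
      rw [Finset.mem_filter] at hu
      obtain ⟨huI, huv, C', hC', huC', hvC'⟩ := hu
      have : C' = C := A.eq_of_mem_parts hC' hC hvC' hyC
      subst this
      have hule : u ≤ p.1 := by
        by_contra h
        exact hbet u (Finset.mem_union_right _ huC') ⟨lt_of_not_ge h, huv⟩
      have : u ≠ p.1 := by
        intro h; subst h
        exact hBC (A.eq_of_mem_parts hB hC' hxB huC')
      exact lt_of_le_of_ne hule this
    · intro j hj hxj
      obtain ⟨B', hB', hxB', hjB'⟩ := hj
      have : B' = B := A.eq_of_mem_parts hB' hB hxB' hxB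
      subst this
      have hjge : p.2 ≤ j := by
        by_contra h
        exact hbet j (Finset.mem_union_left _ hjB') ⟨hxj, lt_of_not_ge h⟩
      have : j ≠ p.2 := by
        intro h; subst h
        exact hBC (A.eq_of_mem_parts hB hC hjB' hyC)
      exact lt_of_le_of_ne hjge (Ne.symm this)
  · -- backward
    intro x hx
    rw [Finset.mem_filter] at hx
    obtain ⟨hxI, hpx, hxv, hsucc⟩ := hx
    obtain ⟨B, hB, hxB⟩ := A.exists_mem hxI
    obtain ⟨C, hC, hvC⟩ := A.exists_mem hv
    have hBC : B ≠ C := by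
      intro h; subst h
      have hmem : x ∈ (Finset.Icc 1 n).filter (fun u => u < v ∧ sameBlock n A u v) :=
        Finset.mem_filter.2 ⟨hxI, hxv, B, hB, hxB, hvC⟩
      have : x ≤ partner n A v := Finset.le_sup (f := id) hmem
      omega
    rw [Finset.mem_filter, Finset.mem_filter]
    refine ⟨⟨Finset.mem_product.2 ⟨hxI, hv⟩, hxv, B, hB, C, hC, hBC, hxB, hvC, ?_⟩, rfl⟩
    intro k hk ⟨h1, h2⟩
    rcases Finset.mem_union.1 hk with hkB | hkC
    · exact absurd (hsucc k ⟨B, hB, hxB, hkB⟩ h1) (not_lt.2 (le_of_lt h2))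
    · have hkI : k ∈ Finset.Icc 1 n := A.le hC hkC
      have hmem : k ∈ (Finset.Icc 1 n).filter (fun u => u < v ∧ sameBlock n A u v) :=
        Finset.mem_filter.2 ⟨hkI, h2, C, hC, hkC, hvC⟩
      have : k ≤ partner n A v := Finset.le_sup (f := id) hmem
      omega
  · intro p hp
    rw [Finset.mem_filter] at hp
    exact Prod.ext rfl hp.2.symm
  · intro x _
    rfl
end

section
/- Let n ≥ 1, let A be a set partition of {1,…,n}, and let (r_{i,j}) be the rank-control matrix of the adjacency matrix M(A). Then for all i, j ∈ {1,…,n}, the entry r_{i,j} equals the number of arcs (k,l) of A with i ≤ k < l ≤ j. -/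
open Finset
open scoped Classical

open Matrix

lemma arcs_bounds {n : ℕ} {A : Finpartition (Finset.Icc 1 n)} {p : ℕ × ℕ}
    (hp : p ∈ arcs n A) : 1 ≤ p.1 ∧ p.1 ≤ n ∧ 1 ≤ p.2 ∧ p.2 ≤ n ∧ p.1 < p.2 := by
  simp only [arcs, Finset.mem_filter, Finset.mem_product, Finset.mem_Icc] at hp
  exact ⟨hp.1.1.1, hp.1.1.2, hp.1.2.1, hp.1.2.2, hp.2.1⟩

lemma arcs_snd_unique {n : ℕ} {A : Finpartition (Finset.Icc 1 n)} {a b b' : ℕ}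
    (h : (a, b) ∈ arcs n A) (h' : (a, b') ∈ arcs n A) : b = b' := by
  simp only [arcs, Finset.mem_filter] at h h'
  obtain ⟨-, hab, B, hB, haB, hbB, hno⟩ := h
  obtain ⟨-, hab', B', hB', haB', hbB', hno'⟩ := h'
  have hBB : B = B' := A.eq_of_mem_parts hB hB' haB haB'
  subst hBB
  rcases lt_trichotomy b b' with hlt | heq | hgt
  · exact absurd ⟨hab, hlt⟩ (hno' b hbB)
  · exact heq
  · exact absurd ⟨hab', hgt⟩ (hno b' hbB')

lemma arcs_fst_unique {n : ℕ} {A : Finpartition (Finset.Icc 1 n)} {a a' b : ℕ}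
    (h : (a, b) ∈ arcs n A) (h' : (a', b) ∈ arcs n A) : a = a' := by
  simp only [arcs, Finset.mem_filter] at h h'
  obtain ⟨-, hab, B, hB, haB, hbB, hno⟩ := h
  obtain ⟨-, hab', B', hB', haB', hbB', hno'⟩ := h'
  have hBB : B = B' := A.eq_of_mem_parts hB hB' hbB hbB'
  subst hBB
  rcases lt_trichotomy a a' with hlt | heq | hgt
  · exact absurd ⟨hlt, hab'⟩ (hno a' haB')
  · exact heq
  · exact absurd ⟨hgt, hab⟩ (hno' a haB)

lemma rank_single_cols {R C : Type*} [Fintype R] [Fintype C] [DecidableEq R] [DecidableEq C]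
    (M : Matrix R C ℚ) (P : C → Prop) [DecidablePred P] (ρ : C → R)
    (hcol : ∀ c, (Mᵀ c) = if P c then (Pi.single (ρ c) 1 : R → ℚ) else 0)
    (hinj : ∀ c c', P c → P c' → ρ c = ρ c' → c = c') :
    M.rank = (Finset.univ.filter P).card := by
  have hli : LinearIndependent ℚ (fun c : {c : C // P c} => (Pi.single (ρ c.1) 1 : R → ℚ)) := by
    have h1 : Function.Injective (fun c : {c : C // P c} => ρ c.1) := by
      intro c c' h
      exact Subtype.ext (hinj _ _ c.2 c'.2 h)
    have h2 := (Pi.basisFun ℚ R).linearIndependent.comp _ h1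
    simpa [Function.comp_def] using h2
  have hspan : Submodule.span ℚ (Set.range Mᵀ)
      = Submodule.span ℚ (Set.range (fun c : {c : C // P c} => (Pi.single (ρ c.1) 1 : R → ℚ))) := by
    apply le_antisymm
    · rw [Submodule.span_le]
      rintro _ ⟨c, rfl⟩
      rw [hcol]
      by_cases h : P c
      · rw [if_pos h]
        exact Submodule.subset_span ⟨⟨c, h⟩, rfl⟩
      · rw [if_neg h]; exact Submodule.zero_mem _
    · rw [Submodule.span_le]
      rintro _ ⟨⟨c, hc⟩, rfl⟩
      have h3 : Mᵀ c = Pi.single (ρ c) 1 := by rw [hcol, if_pos hc]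
      show (Pi.single (ρ c) 1 : R → ℚ) ∈ (Submodule.span ℚ (Set.range Mᵀ) : Set (R → ℚ))
      rw [← h3]
      exact Submodule.subset_span ⟨c, rfl⟩
  rw [Matrix.rank_eq_finrank_span_cols, show M.col = Mᵀ from rfl, hspan, finrank_span_eq_card hli,
    Fintype.card_subtype]


theorem rank_aux (n : ℕ) (hn : 1 ≤ n) (A : Finpartition (Finset.Icc 1 n))
    (i j : ℕ) (hi : i ∈ Finset.Icc 1 n) (hj : j ∈ Finset.Icc 1 n) :
    ((adjMatrix n A).submatrix (fun k : {k : Fin n // i ≤ (k : ℕ) + 1} => (k : Fin n))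
               (fun l : {l : Fin n // (l : ℕ) + 1 ≤ j} => (l : Fin n))).rank
      = ((arcs n A).filter (fun p => i ≤ p.1 ∧ p.2 ≤ j)).card := by
  simp only [Finset.mem_Icc] at hi hj
  classical
  set R := {k : Fin n // i ≤ (k : ℕ) + 1} with hR
  set C := {l : Fin n // (l : ℕ) + 1 ≤ j} with hC
  set M := (adjMatrix n A).submatrix (fun k : R => (k : Fin n)) (fun l : C => (l : Fin n))
    with hM
  set Q : C → Prop := fun c => ∃ r : R, (((r : Fin n) : ℕ) + 1, ((c : Fin n) : ℕ) + 1) ∈ arcs n A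
    with hQ
  have hdef : R := ⟨⟨n - 1, by omega⟩, by simp only []; omega⟩
  set ρ : C → R := fun c => if h : Q c then h.choose else hdef with hρ
  have hρspec : ∀ c : C, Q c →
      (((ρ c : Fin n) : ℕ) + 1, ((c : Fin n) : ℕ) + 1) ∈ arcs n A := by
    intro c hc
    rw [hρ]
    simp only [dif_pos hc]
    exact hc.choose_spec
  have hcol : ∀ c, (Mᵀ c) = if Q c then Pi.single (ρ c) 1 else 0 := by
    intro c
    funext r
    by_cases hc : Q c
    · rw [if_pos hc]
      have hspec := hρspec c hc
      by_cases hr : r = ρ c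
      · subst hr
        simp only [hM, Matrix.transpose_apply, Matrix.submatrix_apply, adjMatrix]
        rw [if_pos hspec, Pi.single_eq_same]
      · have hnot : (((r : Fin n) : ℕ) + 1, ((c : Fin n) : ℕ) + 1) ∉ arcs n A := by
          intro habs
          apply hr
          have := arcs_fst_unique habs hspec
          exact Subtype.ext (Fin.ext (by omega))
        simp only [hM, Matrix.transpose_apply, Matrix.submatrix_apply, adjMatrix]
        rw [if_neg hnot, Pi.single_eq_of_ne hr]
    · rw [if_neg hc]
      have hnot : (((r : Fin n) : ℕ) + 1, ((c : Fin n) : ℕ) + 1) ∉ arcs n A :=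
        fun habs => hc ⟨r, habs⟩
      simp only [hM, Matrix.transpose_apply, Matrix.submatrix_apply, adjMatrix]
      rw [if_neg hnot]
      rfl
  have hinj : ∀ c c', Q c → Q c' → ρ c = ρ c' → c = c' := by
    intro c c' hc hc' h
    have h1 := hρspec c hc
    have h2 := hρspec c' hc'
    rw [h] at h1
    have := arcs_snd_unique h1 h2
    exact Subtype.ext (Fin.ext (by omega))
  rw [rank_single_cols M Q ρ hcol hinj]
  symm
  apply Finset.card_bij
    (i := fun p hp => (⟨⟨p.2 - 1, by
      have := arcs_bounds (Finset.mem_filter.mp hp).1; omega⟩, by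
      have h1 := arcs_bounds (Finset.mem_filter.mp hp).1
      have h2 := (Finset.mem_filter.mp hp).2
      simp only []
      omega⟩ : C))
  · intro p hp
    simp only [Finset.mem_filter, Finset.mem_univ, true_and]
    have h1 := arcs_bounds (Finset.mem_filter.mp hp).1
    have h2 := (Finset.mem_filter.mp hp).2
    rw [hQ]
    refine ⟨⟨⟨p.1 - 1, by omega⟩, by simp only []; omega⟩, ?_⟩
    simp only []
    have e1 : p.1 - 1 + 1 = p.1 := by omega
    have e2 : p.2 - 1 + 1 = p.2 := by omega
    rw [e1, e2]
    exact (Finset.mem_filter.mp hp).1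
  · intro p hp q hq h
    have h1 := arcs_bounds (Finset.mem_filter.mp hp).1
    have h2 := arcs_bounds (Finset.mem_filter.mp hq).1
    have hval : p.2 - 1 = q.2 - 1 := congrArg (fun c : C => ((c : Fin n) : ℕ)) h
    have hsnd : p.2 = q.2 := by omega
    have hfst : p.1 = q.1 := by
      apply arcs_fst_unique (b := p.2)
      · have := (Finset.mem_filter.mp hp).1
        simpa using this
      · rw [hsnd]
        have := (Finset.mem_filter.mp hq).1
        simpa using this
    exact Prod.ext hfst hsnd
  · rintro ⟨c, hcle⟩ hc
    simp only [Finset.mem_filter, Finset.mem_univ, true_and, hQ] at hc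
    obtain ⟨r, hr⟩ := hc
    refine ⟨(((r : Fin n) : ℕ) + 1, (c : ℕ) + 1), ?_, ?_⟩
    · rw [Finset.mem_filter]
      exact ⟨hr, r.2, hcle⟩
    · apply Subtype.ext
      apply Fin.ext
      simp

/-- For `n ≥ 1`, a set partition `A` of `{1,…,n}` and `i, j ∈ {1,…,n}`,
the entry `r_{i,j}` of the rank-control matrix of the adjacency matrix `M(A)` equals the
number of arcs `(k,l)` of `A` with `i ≤ k < l ≤ j`. -/
theorem rankControl_eq_card_arcs (n : ℕ) (hn : 1 ≤ n) (A : Finpartition (Finset.Icc 1 n))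
    (i j : ℕ) (hi : i ∈ Finset.Icc 1 n) (hj : j ∈ Finset.Icc 1 n) :
    rankControl n (adjMatrix n A) i j
      = ((arcs n A).filter (fun p => i ≤ p.1 ∧ p.2 ≤ j)).card :=
  rank_aux n hn A i j hi hj
end

section
/- Let n ≥ 1 and let A be a set partition of {1,…,n}. Then D(A) + E(A) = n(n−1)/2, where D(A) = #{(i,j) : 2 ≤ i ≤ n, 1 ≤ j ≤ n−1, r_{i,j} ≠ r_{i−1,j+1}} and E(A) = #{(i,j) : 2 ≤ i ≤ j+1 ≤ n and r_{i,j} = r_{i−1,j+1}}. -/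
open Finset
open scoped Classical

lemma rankControl_adj_zero (n : ℕ) (A : Finpartition (Finset.Icc 1 n)) {i j : ℕ}
    (h : j ≤ i) : rankControl n (adjMatrix n A) i j = 0 := by
  unfold rankControl
  have hz : (adjMatrix n A).submatrix
      (fun k : {k : Fin n // i ≤ (k : ℕ) + 1} => (k : Fin n))
      (fun l : {l : Fin n // (l : ℕ) + 1 ≤ j} => (l : Fin n)) = 0 := by
    ext k l
    simp only [Matrix.submatrix_apply, adjMatrix, Matrix.zero_apply, ite_eq_right_iff]
    intro hmem
    have hlt : ((k.1 : ℕ) + 1) < ((l.1 : ℕ) + 1) := (Finset.mem_filter.mp hmem).2.1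
    have hk := k.2
    have hl := l.2
    exact absurd hlt (by omega)
  rw [hz, Matrix.rank_zero]

/-- For `n ≥ 1` and a set partition `A` of `{1,…,n}`,
`D(A) + E(A) = n(n−1)/2`, where `D(A)` counts pairs `(i,j)` with `2 ≤ i ≤ n`,
`1 ≤ j ≤ n−1` and `r_{i,j} ≠ r_{i−1,j+1}`, and `E(A)` counts pairs `(i,j)` with
`2 ≤ i ≤ j+1 ≤ n` and `r_{i,j} = r_{i−1,j+1}`. -/
theorem D_add_E (n : ℕ) (hn : 1 ≤ n) (A : Finpartition (Finset.Icc 1 n)) :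
    (((Finset.Icc 2 n ×ˢ Finset.Icc 1 (n - 1))).filter
        (fun p => rankControl n (adjMatrix n A) p.1 p.2 ≠
          rankControl n (adjMatrix n A) (p.1 - 1) (p.2 + 1))).card +
      ((Finset.Icc 2 n ×ˢ Finset.Icc 1 n).filter
        (fun p => p.1 ≤ p.2 + 1 ∧ p.2 + 1 ≤ n ∧
          rankControl n (adjMatrix n A) p.1 p.2 =
            rankControl n (adjMatrix n A) (p.1 - 1) (p.2 + 1))).card
      = n * (n - 1) / 2 := by
  classical
  set r := rankControl n (adjMatrix n A) with hr
  set S : Finset (ℕ × ℕ) := Finset.Icc 2 n ×ˢ Finset.Icc 1 (n - 1) with hS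
  have hE : ((Finset.Icc 2 n ×ˢ Finset.Icc 1 n).filter
        (fun p => p.1 ≤ p.2 + 1 ∧ p.2 + 1 ≤ n ∧ r p.1 p.2 = r (p.1 - 1) (p.2 + 1)))
      = S.filter (fun p => p.1 ≤ p.2 + 1 ∧ r p.1 p.2 = r (p.1 - 1) (p.2 + 1)) := by
    ext p
    simp only [hS, Finset.mem_filter, Finset.mem_product, Finset.mem_Icc]
    constructor
    · rintro ⟨⟨h1, h2⟩, h3, h4, h5⟩
      exact ⟨⟨h1, h2.1, by omega⟩, h3, h5⟩
    · rintro ⟨⟨h1, h2⟩, h3, h5⟩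
      exact ⟨⟨h1, h2.1, by omega⟩, h3, by omega, h5⟩
  rw [hE]
  have key : ∀ p ∈ S, ¬ (p.1 ≤ p.2 + 1) → r p.1 p.2 = r (p.1 - 1) (p.2 + 1) := by
    intro p _ hle
    rw [hr, rankControl_adj_zero n A (by omega), rankControl_adj_zero n A (by omega)]
  have hdisj : Disjoint (S.filter (fun p => r p.1 p.2 ≠ r (p.1 - 1) (p.2 + 1)))
      (S.filter (fun p => p.1 ≤ p.2 + 1 ∧ r p.1 p.2 = r (p.1 - 1) (p.2 + 1))) := by
    rw [Finset.disjoint_left]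
    intro p h1 h2
    exact (Finset.mem_filter.mp h1).2 (Finset.mem_filter.mp h2).2.2
  have hunion : S.filter (fun p => r p.1 p.2 ≠ r (p.1 - 1) (p.2 + 1)) ∪
      S.filter (fun p => p.1 ≤ p.2 + 1 ∧ r p.1 p.2 = r (p.1 - 1) (p.2 + 1))
      = S.filter (fun p => p.1 ≤ p.2 + 1) := by
    ext p
    simp only [Finset.mem_union, Finset.mem_filter]
    constructor
    · rintro (⟨hp, hne⟩ | ⟨hp, hle, _⟩)
      · refine ⟨hp, ?_⟩
        by_contra hle
        exact hne (key p hp hle)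
      · exact ⟨hp, hle⟩
    · rintro ⟨hp, hle⟩
      by_cases he : r p.1 p.2 = r (p.1 - 1) (p.2 + 1)
      · exact Or.inr ⟨hp, hle, he⟩
      · exact Or.inl ⟨hp, he⟩
  rw [← Finset.card_union_of_disjoint hdisj, hunion]
  have memb : ∀ p ∈ S.filter (fun p => p.1 ≤ p.2 + 1), p.2 ∈ Finset.Icc 1 (n - 1) := by
    intro p hp
    exact (Finset.mem_product.mp (Finset.mem_filter.mp hp).1).2
  rw [Finset.card_eq_sum_card_fiberwise memb]
  have hfib : ∀ j ∈ Finset.Icc 1 (n - 1),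
      ((S.filter (fun p => p.1 ≤ p.2 + 1)).filter (fun p => p.2 = j)).card = j := by
    intro j hj
    rw [Finset.mem_Icc] at hj
    have himg : (S.filter (fun p => p.1 ≤ p.2 + 1)).filter (fun p => p.2 = j)
        = (Finset.Icc 2 (j + 1)).image (fun i => (i, j)) := by
      ext ⟨a, b⟩
      simp only [hS, Finset.mem_filter, Finset.mem_product, Finset.mem_Icc,
        Finset.mem_image, Prod.mk.injEq]
      constructor
      · rintro ⟨⟨⟨h1, h2⟩, h3⟩, h4⟩
        exact ⟨a, by omega, rfl, by omega⟩
      · rintro ⟨i, hi, hia, hjb⟩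
        refine ⟨⟨⟨?_, ?_⟩, ?_⟩, ?_⟩ <;> omega
    rw [himg, Finset.card_image_of_injective _ (fun a b h => by
      simpa using congrArg Prod.fst h), Nat.card_Icc]
    omega
  rw [Finset.sum_congr rfl hfib]
  have hins : Finset.range n = insert 0 (Finset.Icc 1 (n - 1)) := by
    ext x
    simp only [Finset.mem_range, Finset.mem_insert, Finset.mem_Icc]
    omega
  have := Finset.sum_range_id n
  rw [hins, Finset.sum_insert (by simp)] at this
  omega
end

section
/- Let F be a field, n ≥ 1, let X be an n×n matrix over F, let B and C be invertible upper-triangular n×n matrices over F, and set Y = B·X·C. Then for all k, ℓ with 1 ≤ k, ℓ ≤ n, the rank of the lower-left k×ℓ submatrix of X equals the rank of the lower-left k×ℓ submatrix of Y, where the lower-left k×ℓ submatrix of an n×n matrix consists of its last k rows and first ℓ columns. -/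
open Finset
open scoped Classical

noncomputable section

/-- The rank of the lower-left `k × ℓ` submatrix of an `n × n` matrix `M`: the submatrix
consisting of rows `n−k+1, …, n` and columns `1, …, ℓ` (in 1-based indexing). -/
noncomputable def lowerLeftRank {F : Type*} [Field F] (n : ℕ)
    (M : Matrix (Fin n) (Fin n) F) (k l : ℕ) : ℕ :=
  (M.submatrix (fun r : {r : Fin n // n - k + 1 ≤ (r : ℕ) + 1} => (r : Fin n))
               (fun c : {c : Fin n // (c : ℕ) + 1 ≤ l} => (c : Fin n))).rank

end

private lemma sum_restrict_aux {F : Type*} [AddCommMonoid F] {n : ℕ} (p : Fin n → Prop)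
    [DecidablePred p] (g : Fin n → F) (h : ∀ j, ¬ p j → g j = 0) :
    ∑ j : Fin n, g j = ∑ j : Subtype p, g ↑j := by
  rw [← Finset.sum_subtype (Finset.univ.filter p) (by simp) g]
  exact (Finset.sum_filter_of_ne (fun x _ hx => by
    by_contra hp; exact hx (h x hp))).symm

/-- Let `F` be a field, `n ≥ 1`, `X` an `n × n` matrix over `F`, and let
`B`, `C` be invertible upper-triangular `n × n` matrices over `F`.  Set `Y = B·X·C`.
Then for all `1 ≤ k, ℓ ≤ n`, the rank of the lower-left `k × ℓ` submatrix of `X` equals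
the rank of the lower-left `k × ℓ` submatrix of `Y`. -/
theorem lowerLeftRank_invariant {F : Type*} [Field F] (n : ℕ) (hn : 1 ≤ n)
    (X B C Y : Matrix (Fin n) (Fin n) F)
    (hB : IsUnit B) (hBtri : ∀ i j : Fin n, j < i → B i j = 0)
    (hC : IsUnit C) (hCtri : ∀ i j : Fin n, j < i → C i j = 0)
    (hY : Y = B * X * C)
    (k l : ℕ) (hk1 : 1 ≤ k) (hkn : k ≤ n) (hl1 : 1 ≤ l) (hln : l ≤ n) :
    lowerLeftRank n X k l = lowerLeftRank n Y k l := by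
  classical
  set p : Fin n → Prop := fun r => n - k + 1 ≤ (r : ℕ) + 1 with hp
  set q : Fin n → Prop := fun c => (c : ℕ) + 1 ≤ l with hq
  -- diagonal entries of B and C are nonzero
  have hBdet : B.det = ∏ i, B i i := Matrix.det_of_upperTriangular hBtri
  have hCdet : C.det = ∏ i, C i i := Matrix.det_of_upperTriangular hCtri
  have hBdiag : ∀ i, B i i ≠ 0 := by
    have := hB.map (Matrix.detMonoidHom (n := Fin n) (R := F))
    rw [Matrix.coe_detMonoidHom, hBdet, isUnit_iff_ne_zero,
      Finset.prod_ne_zero_iff] at this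
    exact fun i => this i (Finset.mem_univ i)
  have hCdiag : ∀ i, C i i ≠ 0 := by
    have := hC.map (Matrix.detMonoidHom (n := Fin n) (R := F))
    rw [Matrix.coe_detMonoidHom, hCdet, isUnit_iff_ne_zero,
      Finset.prod_ne_zero_iff] at this
    exact fun i => this i (Finset.mem_univ i)
  -- the corner blocks of B and C
  set B' : Matrix (Subtype p) (Subtype p) F :=
    B.submatrix Subtype.val Subtype.val with hB'
  set C' : Matrix (Subtype q) (Subtype q) F :=
    C.submatrix Subtype.val Subtype.val with hC'
  have hB'tri : ∀ i j : Subtype p, (j : Fin n) < (i : Fin n) → B' i j = 0 :=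
    fun i j h => hBtri _ _ h
  have hC'tri : ∀ i j : Subtype q, (j : Fin n) < (i : Fin n) → C' i j = 0 :=
    fun i j h => hCtri _ _ h
  have hB'det : IsUnit B'.det := by
    rw [Matrix.det_of_upperTriangular
      (fun i j (h : j < i) => hB'tri i j (Subtype.coe_lt_coe.mpr h)),
      isUnit_iff_ne_zero, Finset.prod_ne_zero_iff]
    exact fun i _ => hBdiag i
  have hC'det : IsUnit C'.det := by
    rw [Matrix.det_of_upperTriangular
      (fun i j (h : j < i) => hC'tri i j (Subtype.coe_lt_coe.mpr h)),
      isUnit_iff_ne_zero, Finset.prod_ne_zero_iff]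
    exact fun i _ => hCdiag i
  -- the key factorization
  have key : Y.submatrix (fun r : Subtype p => (r : Fin n)) (fun c : Subtype q => (c : Fin n))
      = B' * (X.submatrix (fun r : Subtype p => (r : Fin n))
          (fun c : Subtype q => (c : Fin n))) * C' := by
    ext r c
    have h1 : ∀ j : Fin n, (∑ m, B ↑r m * X m j) = ∑ m : Subtype p, B ↑r ↑m * X ↑m j := by
      intro j
      refine sum_restrict_aux p _ (fun m hm => ?_)
      have hmr : m < (r : Fin n) := by
        have h1 : (m : ℕ) < n - k := by
          simpa [hp] using Nat.lt_of_not_le (by simpa [hp] using hm)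
        have h2 : n - k ≤ (r : ℕ) := Nat.lt_succ_iff.mp (Nat.lt_of_lt_of_le (Nat.lt_succ_self _) r.2)
        exact Fin.lt_def.mpr (lt_of_lt_of_le h1 h2)
      rw [hBtri _ _ hmr, zero_mul]
    have h2 : (∑ j : Fin n, (∑ m, B ↑r m * X m j) * C j ↑c)
        = ∑ j : Subtype q, (∑ m, B ↑r m * X m ↑j) * C ↑j ↑c := by
      refine sum_restrict_aux q _ (fun j hj => ?_)
      have hcj : (c : Fin n) < j := by
        have h1 : l ≤ (j : ℕ) := by
          have := (by simpa [hq] using hj : l ≤ (j : ℕ))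
          omega
        exact Fin.lt_def.mpr (lt_of_lt_of_le c.2 (by omega))
      rw [hCtri _ _ hcj, mul_zero]
    simp only [Matrix.submatrix_apply, hY, Matrix.mul_apply]
    rw [h2]
    refine Finset.sum_congr rfl (fun j _ => ?_)
    rw [h1]; rfl
  unfold lowerLeftRank
  rw [key, Matrix.rank_mul_eq_left_of_isUnit_det C' _ hC'det,
    Matrix.rank_mul_eq_right_of_isUnit_det B' _ hB'det]
end

section
/- Let n ≥ 1. Then Σ_{A ∈ Π_n} (−1)^{i(A)} equals (−1)^n if n ≡ 0 (mod 3), equals (−1)^{n+1} if n ≡ 1 (mod 3), and equals 0 if n ≡ 2 (mod 3). -/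
open Finset
open scoped Classical

namespace IG

lemma sup_id_mem {C : Finset ℕ} (h : C.Nonempty) : C.sup id ∈ C := by
  induction C using Finset.induction with
  | empty => simp at h
  | @insert a s ha ih =>
    rw [Finset.sup_insert]
    rcases s.eq_empty_or_nonempty with rfl | hs
    · simp
    · have hm := ih hs
      rcases le_total a (s.sup id) with h' | h'
      · show max (id a) (s.sup id) ∈ insert a s
        simp only [id]
        rw [max_eq_right h']
        exact Finset.mem_insert_of_mem hm
      · show max (id a) (s.sup id) ∈ insert a s
        simp only [id]
        rw [max_eq_left h']
        exact Finset.mem_insert_self _ _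

lemma le_sup_id {C : Finset ℕ} {x : ℕ} (hx : x ∈ C) : x ≤ C.sup id :=
  Finset.le_sup (f := id) hx

/-- general counting lemma -/
lemma sum_count_gt (M : Finset ℕ) (f : ℕ → ℤ) :
    ∑ m ∈ M, f ((M.filter (fun m' => m < m')).card) = ∑ j ∈ Finset.range M.card, f j := by
  set c : ℕ → ℕ := fun m => (M.filter (fun m' => m < m')).card with hc
  have hlt : ∀ m ∈ M, c m < M.card := by
    intro m hm
    apply Finset.card_lt_card
    constructor
    · exact Finset.filter_subset _ _
    · intro hsub
      have := hsub hm
      simp at this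
  have hanti : ∀ m₁ ∈ M, ∀ m₂ ∈ M, m₁ < m₂ → c m₂ < c m₁ := by
    intro m₁ h₁ m₂ h₂ hlt'
    apply Finset.card_lt_card
    constructor
    · intro m' hm'
      simp only [Finset.mem_filter] at hm' ⊢
      exact ⟨hm'.1, by omega⟩
    · intro hsub
      have := hsub (Finset.mem_filter.2 ⟨h₂, hlt'⟩)
      simp at this
  have hinj : Set.InjOn c M := by
    intro m₁ h₁ m₂ h₂ he
    by_contra hne
    rcases lt_or_gt_of_ne hne with h | h
    · exact absurd he (by have := hanti m₁ h₁ m₂ h₂ h; omega)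
    · exact absurd he (by have := hanti m₂ h₂ m₁ h₁ h; omega)
  have himg : M.image c = Finset.range M.card := by
    apply Finset.eq_of_subset_of_card_le
    · intro j hj
      simp only [Finset.mem_image] at hj
      obtain ⟨m, hm, rfl⟩ := hj
      exact Finset.mem_range.2 (hlt m hm)
    · rw [Finset.card_image_of_injOn hinj, Finset.card_range]
  calc ∑ m ∈ M, f (c m) = ∑ j ∈ M.image c, f j := (Finset.sum_image (fun x hx y hy h => hinj hx hy h)).symm
    _ = ∑ j ∈ Finset.range M.card, f j := by rw [himg]


variable {n : ℕ}

lemma not_mem_Icc_succ : (n+1) ∉ Finset.Icc 1 n := by simp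

lemma part_subset {A : Finpartition (Finset.Icc 1 n)} {C : Finset ℕ} (hC : C ∈ A.parts) :
    C ⊆ Finset.Icc 1 n := A.le hC

lemma succ_not_mem_part {A : Finpartition (Finset.Icc 1 n)} {C : Finset ℕ} (hC : C ∈ A.parts) :
    (n+1) ∉ C := fun h => not_mem_Icc_succ (part_subset hC h)

/-- Insert `n+1` into block `B` (or as a singleton if `B = ∅`). -/
noncomputable def ins (n : ℕ) (A : Finpartition (Finset.Icc 1 n)) (B : Finset ℕ) :
    Finpartition (Finset.Icc 1 (n+1)) :=
  (A.avoid B).extend (b := insert (n+1) (B ∩ Finset.Icc 1 n))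
    (by simp [bot_eq_empty])
    (by
      rw [Finset.disjoint_left]
      intro x hx hx'
      rw [Finset.mem_sdiff] at hx
      rcases Finset.mem_insert.1 hx' with rfl | h
      · exact not_mem_Icc_succ hx.1
      · exact hx.2 (Finset.mem_inter.1 h).1)
    (by
      rw [Finset.sup_eq_union]
      ext x
      simp only [Finset.mem_union, Finset.mem_sdiff, Finset.mem_insert, Finset.mem_inter,
        Finset.mem_Icc]
      by_cases hxB : x ∈ B <;> simp [hxB] <;> omega)

lemma avoid_parts_eq {A : Finpartition (Finset.Icc 1 n)} {B : Finset ℕ}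
    (hB : B = ∅ ∨ B ∈ A.parts) : (A.avoid B).parts = A.parts.erase B := by
  ext C
  rw [Finpartition.mem_avoid, Finset.mem_erase]
  constructor
  · rintro ⟨D, hD, hDB, rfl⟩
    rcases hB with rfl | hB
    · rw [Finset.sdiff_empty]
      exact ⟨fun h => A.ne_bot hD (by simp [h, bot_eq_empty]), hD⟩
    · have hDne : D ≠ B := fun h => hDB (h ▸ le_refl _)
      have : D \ B = D := by
        rw [Finset.sdiff_eq_self_iff_disjoint]
        exact A.disjoint hD hB hDne
      rw [this]
      exact ⟨hDne, hD⟩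
  · rintro ⟨hCB, hC⟩
    refine ⟨C, hC, ?_, ?_⟩
    · intro hle
      rcases hB with rfl | hB
      · exact A.bot_notMem (by simpa [Finset.subset_empty.1 hle] using hC)
      · have hd := A.disjoint hC hB hCB
        have : C = ⊥ := hd.eq_bot_of_le hle
        exact A.bot_notMem (this ▸ hC)
    · rcases hB with rfl | hB
      · simp
      · rw [Finset.sdiff_eq_self_iff_disjoint]
        exact A.disjoint hC hB hCB

lemma ins_parts {A : Finpartition (Finset.Icc 1 n)} {B : Finset ℕ}
    (hB : B = ∅ ∨ B ∈ A.parts) :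
    (ins n A B).parts = insert (insert (n+1) B) (A.parts.erase B) := by
  have hBi : B ∩ Finset.Icc 1 n = B := by
    rcases hB with rfl | hB
    · simp
    · exact Finset.inter_eq_left.2 (part_subset hB)
  rw [ins, Finpartition.extend_parts, hBi, avoid_parts_eq hB]

/-- Remove `n+1` from a partition of `{1,…,n+1}`. -/
noncomputable def res (n : ℕ) (A : Finpartition (Finset.Icc 1 (n+1))) :
    Finpartition (Finset.Icc 1 n) :=
  (A.avoid {n+1}).copy (by ext x; simp only [Finset.mem_sdiff, Finset.mem_Icc,
    Finset.mem_singleton]; omega)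

lemma mem_res_parts {A : Finpartition (Finset.Icc 1 (n+1))} {C : Finset ℕ} :
    C ∈ (res n A).parts ↔ ∃ D ∈ A.parts, ¬ D ⊆ {n+1} ∧ D.erase (n+1) = C := by
  rw [res, Finpartition.copy_parts]
  rw [Finpartition.mem_avoid]
  simp only [← Finset.sdiff_singleton_eq_erase]


/-- The block of `n+1` with `n+1` removed. -/
noncomputable def blk (n : ℕ) (A : Finpartition (Finset.Icc 1 (n+1))) : Finset ℕ :=
  (A.part (n+1)).erase (n+1)

lemma succ_mem_Icc : (n+1) ∈ Finset.Icc 1 (n+1) := by simp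

lemma blk_ins {A : Finpartition (Finset.Icc 1 n)} {B : Finset ℕ}
    (hB : B = ∅ ∨ B ∈ A.parts) : blk n (ins n A B) = B := by
  have hBn : (n+1) ∉ B := by
    rcases hB with rfl | hB
    · simp
    · exact succ_not_mem_part hB
  have h1 : (ins n A B).part (n+1) = insert (n+1) B := by
    apply Finpartition.part_eq_of_mem
    · rw [ins_parts hB]; exact Finset.mem_insert_self _ _
    · exact Finset.mem_insert_self _ _
  rw [blk, h1, Finset.erase_insert hBn]

lemma res_ins {A : Finpartition (Finset.Icc 1 n)} {B : Finset ℕ}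
    (hB : B = ∅ ∨ B ∈ A.parts) : res n (ins n A B) = A := by
  have hBn : (n+1) ∉ B := by
    rcases hB with rfl | hB
    · simp
    · exact succ_not_mem_part hB
  apply Finpartition.ext
  ext C
  rw [mem_res_parts]
  constructor
  · rintro ⟨D, hD, hDs, rfl⟩
    rw [ins_parts hB] at hD
    rcases Finset.mem_insert.1 hD with rfl | hD
    · rw [Finset.erase_insert hBn]
      rcases hB with rfl | hB'
      · exact absurd (by simp) hDs
      · exact hB'
    · have hDn : (n+1) ∉ D := succ_not_mem_part (Finset.mem_of_mem_erase hD)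
      rw [Finset.erase_eq_of_notMem hDn]
      exact Finset.mem_of_mem_erase hD
  · intro hC
    by_cases hCB : C = B
    · subst hCB
      have hCne : C.Nonempty := A.nonempty_of_mem_parts hC
      refine ⟨insert (n+1) C, ?_, ?_, ?_⟩
      · rw [ins_parts (Or.inr hC)]; exact Finset.mem_insert_self _ _
      · intro hsub
        obtain ⟨x, hx⟩ := hCne
        have hx' := hsub (Finset.mem_insert_of_mem hx)
        rw [Finset.mem_singleton] at hx'
        exact hBn (hx' ▸ hx)
      · rw [Finset.erase_insert hBn]
    · refine ⟨C, ?_, ?_, ?_⟩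
      · rw [ins_parts hB]
        exact Finset.mem_insert_of_mem (Finset.mem_erase.2 ⟨hCB, hC⟩)
      · intro hsub
        obtain ⟨x, hx⟩ := A.nonempty_of_mem_parts hC
        have hx' := hsub hx
        rw [Finset.mem_singleton] at hx'
        exact succ_not_mem_part hC (hx' ▸ hx)
      · exact Finset.erase_eq_of_notMem (succ_not_mem_part hC)

lemma blk_mem (A : Finpartition (Finset.Icc 1 (n+1))) :
    blk n A = ∅ ∨ blk n A ∈ (res n A).parts := by
  by_cases h : blk n A = ∅
  · exact Or.inl h
  · right
    rw [mem_res_parts]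
    refine ⟨A.part (n+1), (A.part_mem.2 succ_mem_Icc), ?_, rfl⟩
    intro hsub
    apply h
    rw [blk, Finset.eq_empty_iff_forall_notMem]
    intro x hx
    have := hsub (Finset.mem_of_mem_erase hx)
    rw [Finset.mem_singleton] at this
    exact (Finset.mem_erase.1 hx).1 this

lemma ins_blk (A : Finpartition (Finset.Icc 1 (n+1))) :
    ins n (res n A) (blk n A) = A := by
  have hmem := blk_mem A
  have hD0 : (n+1) ∈ A.part (n+1) := A.mem_part succ_mem_Icc
  have hD0p : A.part (n+1) ∈ A.parts := (A.part_mem.2 succ_mem_Icc)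
  apply Finpartition.ext
  rw [ins_parts hmem]
  have h1 : insert (n+1) (blk n A) = A.part (n+1) := by
    rw [blk, Finset.insert_erase hD0]
  rw [h1]
  have h2 : (res n A).parts.erase (blk n A) = A.parts.erase (A.part (n+1)) := by
    ext C
    simp only [Finset.mem_erase, mem_res_parts]
    constructor
    · rintro ⟨hCb, D, hD, hDs, rfl⟩
      have hDD0 : D ≠ A.part (n+1) := by
        intro h
        exact hCb (by rw [h]; rfl)
      have hDn : (n+1) ∉ D := by
        intro h
        exact hDD0 (A.eq_of_mem_parts hD hD0p h hD0)
      rw [Finset.erase_eq_of_notMem hDn]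
      refine ⟨?_, hD⟩
      intro h
      exact hDn (h ▸ hD0)
    · rintro ⟨hCD0, hC⟩
      have hCn : (n+1) ∉ C := by
        intro h
        exact hCD0 (A.eq_of_mem_parts hC hD0p h hD0)
      constructor
      · intro h
        -- C = blk n A = erase (n+1) (part (n+1)); C nonempty subset of part(n+1) distinct block
        obtain ⟨x, hx⟩ := A.nonempty_of_mem_parts hC
        have hx2 : x ∈ A.part (n+1) := by
          rw [h, blk] at hx
          exact Finset.mem_of_mem_erase hx
        exact hCD0 (A.eq_of_mem_parts hC hD0p hx hx2)
      · refine ⟨C, hC, ?_, Finset.erase_eq_of_notMem hCn⟩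
        intro hsub
        obtain ⟨x, hx⟩ := A.nonempty_of_mem_parts hC
        have := hsub hx
        rw [Finset.mem_singleton] at this
        exact hCn (this ▸ hx)
  rw [h2, Finset.insert_erase hD0p]


/-- The increment of the intertwining number when inserting `n+1` into block `B`. -/
noncomputable def incr (n : ℕ) (A : Finpartition (Finset.Icc 1 n)) (B : Finset ℕ) : ℕ :=
  ((A.parts.erase B).filter (fun C => ∀ b ∈ B, b < C.sup id)).card

lemma empty_not_mem (A : Finpartition (Finset.Icc 1 n)) : ∅ ∉ A.parts := A.bot_notMem

lemma incr_empty (A : Finpartition (Finset.Icc 1 n)) : incr n A ∅ = A.parts.card := by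
  rw [incr, Finset.erase_eq_of_notMem (empty_not_mem A)]
  rw [Finset.filter_true_of_mem (fun C _ => by simp)]

lemma card_parts_ins {A : Finpartition (Finset.Icc 1 n)} {B : Finset ℕ}
    (hB : B = ∅ ∨ B ∈ A.parts) :
    (ins n A B).parts.card = if B = ∅ then A.parts.card + 1 else A.parts.card := by
  rw [ins_parts hB]
  have hni : insert (n+1) B ∉ A.parts.erase B := by
    intro h
    exact succ_not_mem_part (Finset.mem_of_mem_erase h) (Finset.mem_insert_self _ _)
  rw [Finset.card_insert_of_notMem hni]
  rcases hB with rfl | hB'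
  · rw [Finset.erase_eq_of_notMem (empty_not_mem A), if_pos rfl]
  · rw [Finset.card_erase_of_mem hB', if_neg (fun h => empty_not_mem A (by rw [← h]; exact hB'))]
    have : 1 ≤ A.parts.card := Finset.card_pos.2 ⟨B, hB'⟩
    omega

lemma inumber_ins {A : Finpartition (Finset.Icc 1 n)} {B : Finset ℕ}
    (hB : B = ∅ ∨ B ∈ A.parts) :
    inumber (n+1) (ins n A B) = inumber n A + incr n A B := by
  have hBsub : B ⊆ Finset.Icc 1 n := by
    rcases hB with rfl | hB'
    · simp
    · exact part_subset hB'
  have hBn : (n+1) ∉ B := fun h => not_mem_Icc_succ (hBsub h)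
  set good := (A.parts.erase B).filter (fun C => ∀ b ∈ B, b < C.sup id) with hgood
  have key : (Finset.Icc 1 (n+1) ×ˢ Finset.Icc 1 (n+1)).filter
      (fun p => p.1 < p.2 ∧ ∃ D ∈ (ins n A B).parts, ∃ E ∈ (ins n A B).parts, D ≠ E ∧
        p.1 ∈ D ∧ p.2 ∈ E ∧ ∀ k ∈ D ∪ E, ¬ (p.1 < k ∧ k < p.2))
    = ((Finset.Icc 1 n ×ˢ Finset.Icc 1 n).filter
      (fun p => p.1 < p.2 ∧ ∃ D ∈ A.parts, ∃ E ∈ A.parts, D ≠ E ∧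
        p.1 ∈ D ∧ p.2 ∈ E ∧ ∀ k ∈ D ∪ E, ¬ (p.1 < k ∧ k < p.2)))
      ∪ good.image (fun C => (C.sup id, n+1)) := by
    ext p
    obtain ⟨x, y⟩ := p
    simp only [Finset.mem_union, Finset.mem_filter, Finset.mem_product, Finset.mem_image,
      Finset.mem_Icc]
    constructor
    · rintro ⟨⟨⟨hx1, hx2⟩, hy1, hy2⟩, hxy, D, hD, E, hE, hDE, hxD, hyE, hbet⟩
      rw [ins_parts hB] at hD hE
      by_cases hy' : y = n+1
      · subst hy'
        right
        -- E is the block of n+1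
        have hEeq : E = insert (n+1) B := by
          rcases Finset.mem_insert.1 hE with h | h
          · exact h
          · exact absurd hyE (succ_not_mem_part (Finset.mem_of_mem_erase h))
        have hDmem : D ∈ A.parts.erase B := by
          rcases Finset.mem_insert.1 hD with h | h
          · exact absurd (h.trans hEeq.symm) hDE
          · exact h
        have hDIcc : D ⊆ Finset.Icc 1 n := part_subset (Finset.mem_of_mem_erase hDmem)
        have hDle : ∀ k ∈ D, k ≤ x := by
          intro k hk
          have hk2 : k ≤ n := (Finset.mem_Icc.1 (hDIcc hk)).2
          have := hbet k (Or.inl hk)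
          omega
        have hxsup : D.sup id = x :=
          le_antisymm (Finset.sup_le (fun k hk => hDle k hk)) (le_sup_id hxD)
        have hBlt : ∀ b ∈ B, b < D.sup id := by
          intro b hb
          have hb2 : b ≤ n := (Finset.mem_Icc.1 (hBsub hb)).2
          have := hbet b (Or.inr (hEeq ▸ Finset.mem_insert_of_mem hb))
          have hble : b ≤ x := by omega
          have hbne : b ≠ x := by
            intro h
            subst h
            rcases hB with rfl | hB'
            · exact absurd hb (Finset.notMem_empty _)
            · have hDB := (Finset.mem_erase.1 hDmem).1
              have hd := A.disjoint (Finset.mem_of_mem_erase hDmem) hB' hDB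
              exact (Finset.disjoint_left.1 hd) hxD hb
          rw [hxsup]
          omega
        exact ⟨D, Finset.mem_filter.2 ⟨hDmem, hBlt⟩, by rw [hxsup]⟩
      · left
        have hy3 : y ≤ n := by omega
        have hx3 : x ≤ n := by omega
        have hDa : ∃ Da ∈ A.parts, x ∈ Da ∧ Da ⊆ D := by
          rcases Finset.mem_insert.1 hD with rfl | h
          · have hxB : x ∈ B := by
              rcases Finset.mem_insert.1 hxD with rfl | h'
              · omega
              · exact h'
            have hBp : B ∈ A.parts := by
              rcases hB with rfl | hB'
              · exact absurd hxB (Finset.notMem_empty _)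
              · exact hB'
            exact ⟨B, hBp, hxB, Finset.subset_insert _ _⟩
          · exact ⟨D, Finset.mem_of_mem_erase h, hxD, le_refl _⟩
        have hEa : ∃ Ea ∈ A.parts, y ∈ Ea ∧ Ea ⊆ E := by
          rcases Finset.mem_insert.1 hE with rfl | h
          · have hyB : y ∈ B := by
              rcases Finset.mem_insert.1 hyE with rfl | h'
              · omega
              · exact h'
            have hBp : B ∈ A.parts := by
              rcases hB with rfl | hB'
              · exact absurd hyB (Finset.notMem_empty _)
              · exact hB'
            exact ⟨B, hBp, hyB, Finset.subset_insert _ _⟩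
          · exact ⟨E, Finset.mem_of_mem_erase h, hyE, le_refl _⟩
        obtain ⟨Da, hDa1, hDa2, hDa3⟩ := hDa
        obtain ⟨Ea, hEa1, hEa2, hEa3⟩ := hEa
        have hDaEa : Da ≠ Ea := by
          intro h
          have hd := (ins n A B).disjoint (by rw [ins_parts hB]; exact hD)
            (by rw [ins_parts hB]; exact hE) hDE
          exact (Finset.disjoint_left.1 hd) (hDa3 hDa2) (hEa3 (h ▸ hDa2))
        refine ⟨⟨⟨hx1, hx3⟩, hy1, hy3⟩, hxy, Da, hDa1, Ea, hEa1, hDaEa, hDa2, hEa2, ?_⟩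
        intro k hk
        rcases hk with hk | hk
        · exact hbet k (Or.inl (hDa3 hk))
        · exact hbet k (Or.inr (hEa3 hk))
    · rintro (⟨⟨⟨hx1, hx2⟩, hy1, hy2⟩, hxy, Ba, hBa, Ca, hCa, hne, hxBa, hyCa, hbet⟩ |
        ⟨C, hC, hpair⟩)
      · -- old pair
        have f : Finset ℕ → Finset ℕ := fun X => if X = B then insert (n+1) B else X
        have hfmem : ∀ X ∈ A.parts, (if X = B then insert (n+1) B else X) ∈ (ins n A B).parts := by
          intro X hX
          rw [ins_parts hB]
          by_cases h : X = B
          · rw [if_pos h]; exact Finset.mem_insert_self _ _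
          · rw [if_neg h]; exact Finset.mem_insert_of_mem (Finset.mem_erase.2 ⟨h, hX⟩)
        have hfsub : ∀ X : Finset ℕ, X ⊆ (if X = B then insert (n+1) B else X) := by
          intro X
          by_cases h : X = B
          · rw [if_pos h, h]; exact Finset.subset_insert _ _
          · rw [if_neg h]
        have hfne : (if Ba = B then insert (n+1) B else Ba) ≠
            (if Ca = B then insert (n+1) B else Ca) := by
          by_cases h1 : Ba = B <;> by_cases h2 : Ca = B
          · exact absurd (h1.trans h2.symm) hne
          · rw [if_pos h1, if_neg h2]
            intro h
            exact succ_not_mem_part hCa (h ▸ Finset.mem_insert_self _ _)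
          · rw [if_neg h1, if_pos h2]
            intro h
            exact succ_not_mem_part hBa (h.symm ▸ Finset.mem_insert_self _ _)
          · rw [if_neg h1, if_neg h2]; exact hne
        refine ⟨⟨⟨hx1, by omega⟩, hy1, by omega⟩, hxy, _, hfmem Ba hBa, _, hfmem Ca hCa,
          hfne, hfsub Ba hxBa, hfsub Ca hyCa, ?_⟩
        intro k hk
        have hk' : (k ∈ Ba ∨ k ∈ Ca) ∨ k = n+1 := by
          rcases hk with hk | hk
          · by_cases h : Ba = B
            · rw [if_pos h] at hk
              rcases Finset.mem_insert.1 hk with rfl | hk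
              · exact Or.inr rfl
              · exact Or.inl (Or.inl (h ▸ hk))
            · rw [if_neg h] at hk
              exact Or.inl (Or.inl hk)
          · by_cases h : Ca = B
            · rw [if_pos h] at hk
              rcases Finset.mem_insert.1 hk with rfl | hk
              · exact Or.inr rfl
              · exact Or.inl (Or.inr (h ▸ hk))
            · rw [if_neg h] at hk
              exact Or.inl (Or.inr hk)
        rcases hk' with hk' | rfl
        · exact hbet k hk'
        · omega
      · -- new pair
        rw [hgood, Finset.mem_filter, Finset.mem_erase] at hC
        obtain ⟨⟨hCB, hCp⟩, hClt⟩ := hC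
        have hCne : C.Nonempty := A.nonempty_of_mem_parts hCp
        have hsupC : C.sup id ∈ C := sup_id_mem hCne
        have hsub : C ⊆ Finset.Icc 1 n := part_subset hCp
        have hsx := Finset.mem_Icc.1 (hsub hsupC)
        have hpx : C.sup id = x := congrArg Prod.fst hpair
        have hpy : n+1 = y := congrArg Prod.snd hpair
        subst hpx
        subst hpy
        refine ⟨⟨⟨hsx.1, by omega⟩, by omega, le_refl _⟩, by omega,
          C, ?_, insert (n+1) B, ?_, ?_, hsupC, Finset.mem_insert_self _ _, ?_⟩
        · rw [ins_parts hB]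
          exact Finset.mem_insert_of_mem (Finset.mem_erase.2 ⟨hCB, hCp⟩)
        · rw [ins_parts hB]
          exact Finset.mem_insert_self _ _
        · intro h
          exact succ_not_mem_part hCp (h ▸ Finset.mem_insert_self _ _)
        · intro k hk
          rcases hk with hk | hk
          · have := le_sup_id hk
            omega
          · rcases Finset.mem_insert.1 hk with rfl | hk
            · omega
            · have := hClt k hk
              omega
  have hdisj : Disjoint ((Finset.Icc 1 n ×ˢ Finset.Icc 1 n).filter
      (fun p => p.1 < p.2 ∧ ∃ D ∈ A.parts, ∃ E ∈ A.parts, D ≠ E ∧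
        p.1 ∈ D ∧ p.2 ∈ E ∧ ∀ k ∈ D ∪ E, ¬ (p.1 < k ∧ k < p.2)))
      (good.image (fun C => (C.sup id, n+1))) := by
    rw [Finset.disjoint_left]
    rintro ⟨x, y⟩ hp hq
    have h1 : y ≤ n := (Finset.mem_Icc.1 (Finset.mem_product.1 (Finset.mem_filter.1 hp).1).2).2
    obtain ⟨C, _, hpair⟩ := Finset.mem_image.1 hq
    have : n+1 = y := congrArg Prod.snd hpair
    omega
  have hinj : Set.InjOn (fun C : Finset ℕ => (C.sup id, n+1)) good := by
    intro C₁ h₁ C₂ h₂ he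
    rw [hgood, Finset.coe_filter] at h₁ h₂
    obtain ⟨h₁, _⟩ := h₁
    obtain ⟨h₂, _⟩ := h₂
    have hs : C₁.sup id = C₂.sup id := congrArg Prod.fst he
    have m₁ : C₁.sup id ∈ C₁ := sup_id_mem (A.nonempty_of_mem_parts (Finset.mem_of_mem_erase h₁))
    have m₂ : C₂.sup id ∈ C₂ := sup_id_mem (A.nonempty_of_mem_parts (Finset.mem_of_mem_erase h₂))
    exact A.eq_of_mem_parts (Finset.mem_of_mem_erase h₁) (Finset.mem_of_mem_erase h₂)
      m₁ (hs ▸ m₂)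
  rw [inumber, inumber, key, Finset.card_union_of_disjoint hdisj,
    Finset.card_image_of_injOn hinj, incr]


lemma incr_mem_eq {A : Finpartition (Finset.Icc 1 n)} {B : Finset ℕ} (hB : B ∈ A.parts) :
    incr n A B = ((A.parts.image (fun C => C.sup id)).filter (fun m => B.sup id < m)).card := by
  have hBne : B.Nonempty := A.nonempty_of_mem_parts hB
  have hBsup : B.sup id ∈ B := sup_id_mem hBne
  have hcond : ∀ C ∈ A.parts.erase B, ((∀ b ∈ B, b < C.sup id) ↔ B.sup id < C.sup id) := by
    intro C _
    constructor
    · intro h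
      exact h _ hBsup
    · intro h b hb
      exact lt_of_le_of_lt (le_sup_id hb) h
  rw [incr, Finset.filter_congr hcond]
  have herase : (A.parts.erase B).filter (fun C => B.sup id < C.sup id)
      = A.parts.filter (fun C => B.sup id < C.sup id) := by
    ext C
    simp only [Finset.mem_filter, Finset.mem_erase]
    constructor
    · rintro ⟨⟨_, h1⟩, h2⟩
      exact ⟨h1, h2⟩
    · rintro ⟨h1, h2⟩
      refine ⟨⟨?_, h1⟩, h2⟩
      intro h
      subst h
      exact absurd h2 (lt_irrefl _)
  rw [herase]
  have hinj : Set.InjOn (fun C : Finset ℕ => C.sup id) A.parts := by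
    intro C₁ h₁ C₂ h₂ he
    have hs : C₁.sup id = C₂.sup id := he
    exact A.eq_of_mem_parts h₁ h₂ (sup_id_mem (A.nonempty_of_mem_parts h₁))
      (hs ▸ sup_id_mem (A.nonempty_of_mem_parts h₂))
  rw [Finset.filter_image]
  rw [Finset.card_image_of_injOn (hinj.mono (by intro C hC; exact Finset.mem_of_mem_filter _ hC))]

lemma sum_parts_incr (A : Finpartition (Finset.Icc 1 n)) (f : ℕ → ℤ) :
    ∑ B ∈ A.parts, f (incr n A B) = ∑ j ∈ Finset.range A.parts.card, f j := by
  have hinj : Set.InjOn (fun C : Finset ℕ => C.sup id) A.parts := by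
    intro C₁ h₁ C₂ h₂ he
    have hs : C₁.sup id = C₂.sup id := he
    exact A.eq_of_mem_parts h₁ h₂ (sup_id_mem (A.nonempty_of_mem_parts h₁))
      (hs ▸ sup_id_mem (A.nonempty_of_mem_parts h₂))
  calc ∑ B ∈ A.parts, f (incr n A B)
      = ∑ B ∈ A.parts, f (((A.parts.image (fun C => C.sup id)).filter
          (fun m => B.sup id < m)).card) := by
        exact Finset.sum_congr rfl (fun B hB => by rw [incr_mem_eq hB])
    _ = ∑ m ∈ A.parts.image (fun C => C.sup id),
          f (((A.parts.image (fun C => C.sup id)).filter (fun m' => m < m')).card) := by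
        rw [Finset.sum_image (fun x hx y hy h => hinj hx hy h)]
    _ = ∑ j ∈ Finset.range (A.parts.image (fun C => C.sup id)).card, f j :=
        sum_count_gt _ f
    _ = ∑ j ∈ Finset.range A.parts.card, f j := by
        rw [Finset.card_image_of_injOn hinj]

lemma sum_fiber (f : Finpartition (Finset.Icc 1 (n+1)) → ℤ) :
    ∑ A : Finpartition (Finset.Icc 1 (n+1)), f A
      = ∑ A' : Finpartition (Finset.Icc 1 n), ∑ B ∈ insert ∅ A'.parts, f (ins n A' B) := by
  rw [← Finset.sum_fiberwise_of_maps_to (g := res n) (t := Finset.univ)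
    (fun i _ => Finset.mem_univ _) f]
  apply Finset.sum_congr rfl
  intro A' _
  symm
  apply Finset.sum_nbij' (i := fun B => ins n A' B) (j := fun A => blk n A)
  · intro B hB
    have hB' : B = ∅ ∨ B ∈ A'.parts := by
      rcases Finset.mem_insert.1 hB with rfl | h
      · exact Or.inl rfl
      · exact Or.inr h
    rw [Finset.mem_filter]
    exact ⟨Finset.mem_univ _, res_ins hB'⟩
  · intro A hA
    have hres : res n A = A' := (Finset.mem_filter.1 hA).2
    rcases blk_mem A with h | h
    · rw [h]; exact Finset.mem_insert_self _ _
    · rw [hres] at h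
      exact Finset.mem_insert_of_mem h
  · intro B hB
    have hB' : B = ∅ ∨ B ∈ A'.parts := by
      rcases Finset.mem_insert.1 hB with rfl | h
      · exact Or.inl rfl
      · exact Or.inr h
    exact blk_ins hB'
  · intro A hA
    have hres : res n A = A' := (Finset.mem_filter.1 hA).2
    rw [← hres]
    exact ins_blk A
  · intro B _
    rfl


noncomputable def T (n : ℕ) : ℤ :=
  ∑ A : Finpartition (Finset.Icc 1 n), (-1 : ℤ) ^ inumber n A

noncomputable def U (n : ℕ) : ℤ :=
  ∑ A : Finpartition (Finset.Icc 1 n), (-1 : ℤ) ^ (inumber n A + A.parts.card)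

lemma mem_insert_empty {A : Finpartition (Finset.Icc 1 n)} {B : Finset ℕ}
    (hB : B ∈ insert ∅ A.parts) : B = ∅ ∨ B ∈ A.parts := by
  rcases Finset.mem_insert.1 hB with rfl | h
  · exact Or.inl rfl
  · exact Or.inr h

lemma inner_T (A : Finpartition (Finset.Icc 1 n)) :
    2 * ∑ B ∈ insert ∅ A.parts, (-1 : ℤ) ^ inumber (n+1) (ins n A B)
      = (-1 : ℤ) ^ inumber n A + (-1 : ℤ) ^ (inumber n A + A.parts.card) := by
  have h1 : ∑ B ∈ insert ∅ A.parts, (-1 : ℤ) ^ inumber (n+1) (ins n A B)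
      = ∑ B ∈ insert ∅ A.parts, (-1 : ℤ) ^ (inumber n A + incr n A B) :=
    Finset.sum_congr rfl (fun B hB => by rw [inumber_ins (mem_insert_empty hB)])
  rw [h1, Finset.sum_insert (empty_not_mem A), incr_empty]
  have h2 : ∑ B ∈ A.parts, (-1 : ℤ) ^ (inumber n A + incr n A B)
      = (-1 : ℤ) ^ inumber n A * ∑ j ∈ Finset.range A.parts.card, (-1 : ℤ) ^ j := by
    rw [Finset.mul_sum,
      ← sum_parts_incr A (fun j => (-1 : ℤ) ^ inumber n A * (-1 : ℤ) ^ j)]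
    exact Finset.sum_congr rfl (fun B _ => by rw [pow_add])
  rw [h2, neg_one_geom_sum]
  rcases Nat.even_or_odd A.parts.card with hk | hk
  · rw [if_pos hk, pow_add, hk.neg_one_pow]
    ring
  · rw [if_neg (Nat.not_even_iff_odd.2 hk), pow_add, hk.neg_one_pow]
    ring

lemma inner_U (A : Finpartition (Finset.Icc 1 n)) :
    2 * ∑ B ∈ insert ∅ A.parts,
        (-1 : ℤ) ^ (inumber (n+1) (ins n A B) + (ins n A B).parts.card)
      = -3 * (-1 : ℤ) ^ inumber n A + (-1 : ℤ) ^ (inumber n A + A.parts.card) := by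
  have h1 : ∑ B ∈ insert ∅ A.parts,
        (-1 : ℤ) ^ (inumber (n+1) (ins n A B) + (ins n A B).parts.card)
      = ∑ B ∈ insert ∅ A.parts,
        (-1 : ℤ) ^ (inumber n A + incr n A B +
          (if B = ∅ then A.parts.card + 1 else A.parts.card)) :=
    Finset.sum_congr rfl (fun B hB => by
      rw [inumber_ins (mem_insert_empty hB), card_parts_ins (mem_insert_empty hB)])
  rw [h1, Finset.sum_insert (empty_not_mem A), incr_empty, if_pos rfl]
  have h2 : ∑ B ∈ A.parts, (-1 : ℤ) ^ (inumber n A + incr n A B +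
        (if B = ∅ then A.parts.card + 1 else A.parts.card))
      = (-1 : ℤ) ^ (inumber n A + A.parts.card)
        * ∑ j ∈ Finset.range A.parts.card, (-1 : ℤ) ^ j := by
    rw [Finset.mul_sum,
      ← sum_parts_incr A (fun j => (-1 : ℤ) ^ (inumber n A + A.parts.card) * (-1 : ℤ) ^ j)]
    apply Finset.sum_congr rfl
    intro B hB
    rw [if_neg (fun h => empty_not_mem A (by rw [← h]; exact hB))]
    rw [pow_add, pow_add, pow_add]
    ring
  rw [h2, neg_one_geom_sum]
  rcases Nat.even_or_odd A.parts.card with hk | hk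
  · rw [if_pos hk]
    rw [pow_add, pow_add, pow_add, hk.neg_one_pow]
    ring
  · rw [if_neg (Nat.not_even_iff_odd.2 hk)]
    rw [pow_add, pow_add, pow_add, hk.neg_one_pow]
    ring

lemma rec_T : 2 * T (n+1) = T n + U n := by
  rw [T, sum_fiber (fun A => (-1 : ℤ) ^ inumber (n+1) A), Finset.mul_sum]
  rw [T, U, ← Finset.sum_add_distrib]
  exact Finset.sum_congr rfl (fun A _ => inner_T A)

lemma rec_U : 2 * U (n+1) = -3 * T n + U n := by
  rw [U, sum_fiber (fun A => (-1 : ℤ) ^ (inumber (n+1) A + A.parts.card)), Finset.mul_sum]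
  rw [T, U]
  rw [show -3 * ∑ A : Finpartition (Finset.Icc 1 n), (-1 : ℤ) ^ inumber n A
      = ∑ A : Finpartition (Finset.Icc 1 n), -3 * (-1 : ℤ) ^ inumber n A from Finset.mul_sum ..]
  rw [← Finset.sum_add_distrib]
  exact Finset.sum_congr rfl (fun A _ => inner_U A)

lemma parts_one (A : Finpartition (Finset.Icc 1 1)) : A.parts = {{1}} := by
  have h1 : (1 : ℕ) ∈ Finset.Icc 1 1 := by simp
  have hpart : ∀ C ∈ A.parts, C = {1} := by
    intro C hC
    have hsub : C ⊆ {1} := by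
      intro x hx
      have := part_subset hC hx
      simpa using this
    have hne : C.Nonempty := A.nonempty_of_mem_parts hC
    obtain ⟨x, hx⟩ := hne
    have hx1 : x = 1 := by simpa using hsub hx
    apply Finset.Subset.antisymm hsub
    intro y hy
    rw [Finset.mem_singleton] at hy
    subst hy
    exact hx1 ▸ hx
  rw [Finset.eq_singleton_iff_unique_mem]
  constructor
  · have := A.part_mem.2 h1
    rw [hpart _ this] at this
    exact this
  · exact hpart

lemma inumber_one (A : Finpartition (Finset.Icc 1 1)) : inumber 1 A = 0 := by
  rw [inumber, Finset.card_eq_zero, Finset.filter_eq_empty_iff]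
  rintro ⟨x, y⟩ hp
  rw [Finset.mem_product] at hp
  have hx : x = 1 := by simpa using hp.1
  have hy : y = 1 := by simpa using hp.2
  intro h
  rw [hx, hy] at h
  exact absurd h.1 (lt_irrefl _)

lemma card_one : Fintype.card (Finpartition (Finset.Icc 1 1)) = 1 := by
  rw [Fintype.card_eq_one_iff]
  refine ⟨Finpartition.indiscrete (by simp [bot_eq_empty]), ?_⟩
  intro A
  apply Finpartition.ext
  rw [parts_one A, Finpartition.indiscrete_parts]
  norm_num

lemma T_one : T 1 = 1 := by
  rw [T]
  rw [Finset.sum_congr rfl (fun A _ => by rw [inumber_one A, pow_zero])]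
  rw [Finset.sum_const, Finset.card_univ, card_one]
  simp

lemma U_one : U 1 = -1 := by
  rw [U]
  rw [Finset.sum_congr rfl (fun A _ => by
    rw [inumber_one A, parts_one A, Finset.card_singleton, zero_add, pow_one])]
  rw [Finset.sum_const, Finset.card_univ, card_one]
  simp

lemma TU (n : ℕ) (hn : 1 ≤ n) :
    (n % 6 = 0 → T n = 1 ∧ U n = 1) ∧
    (n % 6 = 1 → T n = 1 ∧ U n = -1) ∧
    (n % 6 = 2 → T n = 0 ∧ U n = -2) ∧
    (n % 6 = 3 → T n = -1 ∧ U n = -1) ∧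
    (n % 6 = 4 → T n = -1 ∧ U n = 1) ∧
    (n % 6 = 5 → T n = 0 ∧ U n = 2) := by
  induction n, hn using Nat.le_induction with
  | base =>
    refine ⟨?_, ?_, ?_, ?_, ?_, ?_⟩ <;> intro h <;> first
      | (exact ⟨T_one, U_one⟩) | omega
  | succ n hn ih =>
    obtain ⟨p0, p1, p2, p3, p4, p5⟩ := ih
    have h1 := rec_T (n := n)
    have h2 := rec_U (n := n)
    refine ⟨?_, ?_, ?_, ?_, ?_, ?_⟩ <;> intro h
    · obtain ⟨hT, hU⟩ := p5 (by omega); constructor <;> omega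
    · obtain ⟨hT, hU⟩ := p0 (by omega); constructor <;> omega
    · obtain ⟨hT, hU⟩ := p1 (by omega); constructor <;> omega
    · obtain ⟨hT, hU⟩ := p2 (by omega); constructor <;> omega
    · obtain ⟨hT, hU⟩ := p3 (by omega); constructor <;> omega
    · obtain ⟨hT, hU⟩ := p4 (by omega); constructor <;> omega

end IG


/-- For `n ≥ 1`, `Σ_{A ∈ Π_n} (−1)^{i(A)}` equals `(−1)^n` if
`n ≡ 0 (mod 3)`, equals `(−1)^{n+1}` if `n ≡ 1 (mod 3)`, and equals `0` if
`n ≡ 2 (mod 3)`. -/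
theorem inumber_gen_at_neg_one (n : ℕ) (hn : 1 ≤ n) :
    (n % 3 = 0 →
      ∑ A : Finpartition (Finset.Icc 1 n), (-1 : ℤ) ^ inumber n A = (-1) ^ n) ∧
    (n % 3 = 1 →
      ∑ A : Finpartition (Finset.Icc 1 n), (-1 : ℤ) ^ inumber n A = (-1) ^ (n + 1)) ∧
    (n % 3 = 2 →
      ∑ A : Finpartition (Finset.Icc 1 n), (-1 : ℤ) ^ inumber n A = 0) := by

  obtain ⟨p0, p1, p2, p3, p4, p5⟩ := IG.TU n hn
  have hTdef : IG.T n = ∑ A : Finpartition (Finset.Icc 1 n), (-1 : ℤ) ^ inumber n A := rfl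
  refine ⟨?_, ?_, ?_⟩ <;> intro h3
  · rcases (show n % 6 = 0 ∨ n % 6 = 3 by omega) with h6 | h6
    · have hev : Even n := Nat.even_iff.2 (by omega)
      rw [← hTdef, (p0 h6).1, hev.neg_one_pow]
    · have hod : Odd n := Nat.odd_iff.2 (by omega)
      rw [← hTdef, (p3 h6).1, hod.neg_one_pow]
  · rcases (show n % 6 = 1 ∨ n % 6 = 4 by omega) with h6 | h6
    · have hev : Even (n+1) := Nat.even_iff.2 (by omega)
      rw [← hTdef, (p1 h6).1, hev.neg_one_pow]
    · have hod : Odd (n+1) := Nat.odd_iff.2 (by omega)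
      rw [← hTdef, (p4 h6).1, hod.neg_one_pow]
  · rcases (show n % 6 = 2 ∨ n % 6 = 5 by omega) with h6 | h6
    · rw [← hTdef, (p2 h6).1]
    · rw [← hTdef, (p5 h6).1]
end
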